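/- arXiv:0808.2688 — 5 statements merged into one kernel-verified Lean document; each statement's English description precedes it below -/
import Mathlib

section
/- Every real tensor of format 2×3×3 has tensor rank at most 4. -/
open Matrix


lemma cubic_root (a b c : ℝ) : ∃ x : ℝ, x^3 + a*x^2 + b*x + c = 0 := by
  obtain ⟨A, hA, hA1, hA2⟩ : ∃ A, |a| = A ∧ a ≤ A ∧ -A ≤ a := ⟨|a|, rfl, le_abs_self a, neg_abs_le a⟩
  obtain ⟨B, hB, hB1, hB2⟩ : ∃ B, |b| = B ∧ b ≤ B ∧ -B ≤ b := ⟨|b|, rfl, le_abs_self b, neg_abs_le b⟩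
  obtain ⟨D, hD, hD1, hD2⟩ : ∃ D, |c| = D ∧ c ≤ D ∧ -D ≤ c := ⟨|c|, rfl, le_abs_self c, neg_abs_le c⟩
  have hA0 : 0 ≤ A := hA ▸ abs_nonneg a
  have hB0 : 0 ≤ B := hB ▸ abs_nonneg b
  have hD0 : 0 ≤ D := hD ▸ abs_nonneg c
  set f : ℝ → ℝ := fun x => x^3 + a*x^2 + b*x + c with hf
  set M : ℝ := 1 + A + B + D with hM
  have hM1 : 1 ≤ M := by linarith
  have hfM : 0 ≤ f M := by simp only [hf]; nlinarith
  have hfm : f (-M) ≤ 0 := by simp only [hf]; nlinarith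
  have hcont : ContinuousOn f (Set.Icc (-M) M) := by fun_prop
  have hsub := intermediate_value_Icc (by linarith : (-M : ℝ) ≤ M) hcont
  obtain ⟨x, _, hx⟩ := hsub ⟨hfm, hfM⟩
  exact ⟨x, hx⟩

lemma real_eigen (C : Matrix (Fin 3) (Fin 3) ℝ) :
    ∃ (lam : ℝ) (v : Fin 3 → ℝ), v ≠ 0 ∧ C *ᵥ v = lam • v := by
  obtain ⟨x, hx⟩ := cubic_root (-(C 0 0 + C 1 1 + C 2 2))
    ((C 0 0*C 1 1 - C 0 1*C 1 0) + (C 0 0*C 2 2 - C 0 2*C 2 0) + (C 1 1*C 2 2 - C 1 2*C 2 1))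
    (-C.det)
  have hdet : (x • (1 : Matrix (Fin 3) (Fin 3) ℝ) - C).det = 0 := by
    rw [Matrix.det_fin_three] at hx ⊢
    norm_num [Matrix.sub_apply, Matrix.smul_apply, Matrix.one_apply, Fin.ext_iff]
    linarith [hx]
  obtain ⟨v, hv0, hv⟩ := Matrix.exists_mulVec_eq_zero_iff.2 hdet
  refine ⟨x, v, hv0, ?_⟩
  have := hv
  rw [Matrix.sub_mulVec, Matrix.smul_mulVec, Matrix.one_mulVec, sub_eq_zero] at this
  exact this.symm

lemma mul_vecMulVec (M : Matrix (Fin 3) (Fin 3) ℝ) (r s : Fin 3 → ℝ) :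
    M * vecMulVec r s = vecMulVec (M *ᵥ r) s := by
  ext i j
  simp [Matrix.mul_apply, Matrix.vecMulVec_apply, Matrix.mulVec, dotProduct,
    Finset.sum_mul, mul_assoc]

lemma vecMulVec_mul (M : Matrix (Fin 3) (Fin 3) ℝ) (r s : Fin 3 → ℝ) :
    vecMulVec r s * M = vecMulVec r (s ᵥ* M) := by
  ext i j
  simp [Matrix.mul_apply, Matrix.vecMulVec_apply, Matrix.vecMul, dotProduct,
    Finset.mul_sum, mul_assoc, mul_comm, mul_left_comm]



lemma sing2 (M : Matrix (Fin 3) (Fin 3) ℝ) (h : M.det = 0) :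
    ∃ u w : Fin 2 → Fin 3 → ℝ, ∀ i j, M i j = u 0 i * w 0 j + u 1 i * w 1 j := by
  obtain ⟨v, hv0, hv⟩ := Matrix.exists_mulVec_eq_zero_iff.2 h
  obtain ⟨k, hk⟩ : ∃ k, v k ≠ 0 := by
    by_contra hcon
    push_neg at hcon
    exact hv0 (funext hcon)
  have hrow : ∀ i, M i 0 * v 0 + M i 1 * v 1 + M i 2 * v 2 = 0 := by
    intro i
    have := congrFun hv i
    simpa [Matrix.mulVec, dotProduct, Fin.sum_univ_three] using this
  refine ⟨![fun i => M i (k+1), fun i => M i (k+2)],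
    ![fun j => if j = k+1 then 1 else if j = k then -(v (k+1))/(v k) else 0,
      fun j => if j = k+2 then 1 else if j = k then -(v (k+2))/(v k) else 0], ?_⟩
  intro i j
  have hr := hrow i
  fin_cases k <;> fin_cases j <;>
    simp_all <;> field_simp <;>
    first
    | linear_combination v 0 * hrow i
    | linear_combination v 1 * hrow i
    | linear_combination v 2 * hrow i
    | linear_combination hrow i



lemma l2core (a d lam c1 δ : ℝ) (hc1 : c1 ≠ 0)
    (hx : |2*lam - (a+d)| < δ) :
    ∃ μ1 μ2 y10 y11 y20 y21 : ℝ,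
      μ1 ≠ lam ∧ μ2 ≠ lam ∧
      a*y10 + ((δ^2 - (a-d)^2)/(4*c1))*y11 = μ1*y10 ∧ c1*y10 + d*y11 = μ1*y11 ∧
      a*y20 + ((δ^2 - (a-d)^2)/(4*c1))*y21 = μ2*y20 ∧ c1*y20 + d*y21 = μ2*y21 ∧
      y10*y21 - y11*y20 ≠ 0 := by
  have habs1 : 2*lam - (a+d) ≤ |2*lam - (a+d)| := le_abs_self _
  have habs2 : -(2*lam - (a+d)) ≤ |2*lam - (a+d)| := neg_le_abs _
  have hδ0 : 0 < δ := lt_of_le_of_lt (abs_nonneg _) hx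
  refine ⟨((a+d)+δ)/2, ((a+d)-δ)/2, ((a+d)+δ)/2 - d, c1, ((a+d)-δ)/2 - d, c1,
    by intro h; rw [← h] at habs2; linarith,
    by intro h; rw [← h] at habs1; linarith,
    by field_simp; ring, by ring, by field_simp; ring, by ring, ?_⟩
  have : (((a+d)+δ)/2 - d)*c1 - c1*(((a+d)-δ)/2 - d) = c1 * δ := by ring
  rw [this]
  exact mul_ne_zero hc1 (ne_of_gt hδ0)

lemma l2 (a b c d lam : ℝ) :
    (a = lam ∧ d = lam ∧ b = 0 ∧ c = 0) ∨
    ∃ a' b' c' d' r0 r1 s0 s1 μ1 μ2 y10 y11 y20 y21 : ℝ,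
      a = a' + r0 * s0 ∧ b = b' + r0 * s1 ∧ c = c' + r1 * s0 ∧ d = d' + r1 * s1 ∧
      μ1 ≠ lam ∧ μ2 ≠ lam ∧
      a' * y10 + b' * y11 = μ1 * y10 ∧ c' * y10 + d' * y11 = μ1 * y11 ∧
      a' * y20 + b' * y21 = μ2 * y20 ∧ c' * y20 + d' * y21 = μ2 * y21 ∧
      y10 * y21 - y11 * y20 ≠ 0 := by
  set δ : ℝ := |2*lam - (a+d)| + |a-d| + 1 with hδ
  have hx : |2*lam - (a+d)| < δ := by
    have := abs_nonneg (a-d); simp only [hδ]; linarith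
  have hy : |a - d| < δ := by
    have := abs_nonneg (2*lam - (a+d)); simp only [hδ]; linarith
  have hyy : (a-d)^2 < δ^2 := by
    have h1 : 0 ≤ |a-d| := abs_nonneg _
    have h2 : (a-d)^2 = |a-d|^2 := (sq_abs _).symm
    nlinarith
  by_cases hc : c = 0
  · by_cases hb : b = 0
    · by_cases hd : d = lam
      · by_cases ha : a = lam
        · exact Or.inl ⟨ha, hd, hb, hc⟩
        · refine Or.inr ⟨a, 0, 0, min lam a - 1, 0, 1, 0, d - (min lam a - 1),
            a, min lam a - 1, 1, 0, 0, 1, by ring, by rw [hb]; ring, by rw [hc]; ring, by ring,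
            ha, ?_, by ring, by ring, by ring, by ring, by norm_num⟩
          have := min_le_left lam a; intro h; linarith [h ▸ this]
      · refine Or.inr ⟨min lam d - 1, 0, 0, d, 1, 0, a - (min lam d - 1), 0,
          min lam d - 1, d, 1, 0, 0, 1, by ring, by rw [hb]; ring, by rw [hc]; ring, by ring,
          ?_, hd, by ring, by ring, by ring, by ring, by norm_num⟩
        have := min_le_left lam d; intro h; linarith [h ▸ this]
    · -- c = 0, b ≠ 0
      have hnum : δ^2 - (a-d)^2 ≠ 0 := by nlinarith
      set c1 : ℝ := (δ^2 - (a-d)^2)/(4*b) with hc1def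
      have hc1 : c1 ≠ 0 := by
        simp only [hc1def]
        exact div_ne_zero hnum (by simpa using hb)
      obtain ⟨μ1, μ2, y10, y11, y20, y21, h1, h2, h3, h4, h5, h6, h7⟩ :=
        l2core a d lam c1 δ hc1 hx
      have hb1 : (δ^2 - (a-d)^2)/(4*c1) = b := by
        rw [hc1def]; field_simp
      rw [hb1] at h3 h5
      exact Or.inr ⟨a, b, c1, d, 0, 1, -c1, 0, μ1, μ2, y10, y11, y20, y21,
        by ring, by ring, by rw [hc]; ring, by ring, h1, h2, h3, h4, h5, h6, h7⟩
  · -- c ≠ 0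
    obtain ⟨μ1, μ2, y10, y11, y20, y21, h1, h2, h3, h4, h5, h6, h7⟩ :=
      l2core a d lam c δ hc hx
    exact Or.inr ⟨a, (δ^2 - (a-d)^2)/(4*c), c, d, 1, 0, 0, b - (δ^2 - (a-d)^2)/(4*c),
      μ1, μ2, y10, y11, y20, y21,
      by ring, by ring, by ring, by ring, h1, h2, h3, h4, h5, h6, h7⟩

lemma mainlem (C : Matrix (Fin 3) (Fin 3) ℝ) :
    ∃ (Q P : Matrix (Fin 3) (Fin 3) ℝ) (dv r s : Fin 3 → ℝ),
      Q * P = 1 ∧ C = Q * Matrix.diagonal dv * P + vecMulVec r s := by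
  obtain ⟨lam, v, hv0, heig⟩ := real_eigen C
  obtain ⟨k, hk⟩ : ∃ k, v k ≠ 0 := by
    by_contra hcon; push_neg at hcon; exact hv0 (funext hcon)
  set Q₀ : Matrix (Fin 3) (Fin 3) ℝ :=
    Matrix.of fun i j => if j = 0 then v i else if j = 1 then (if i = k+1 then (1:ℝ) else 0)
      else (if i = k+2 then 1 else 0) with hQ₀def
  have hdet0 : Q₀.det = v k := by
    simp only [hQ₀def]
    fin_cases k <;> simp [Matrix.det_fin_three]
  have hQ0 : IsUnit Q₀.det := by rw [hdet0]; exact isUnit_iff_ne_zero.2 hk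
  obtain ⟨C', hC'def⟩ : ∃ M, Q₀⁻¹ * C * Q₀ = M := ⟨_, rfl⟩
  have hC : C = Q₀ * C' * Q₀⁻¹ := by
    rw [← hC'def]
    rw [Matrix.mul_assoc, Matrix.mul_assoc, Matrix.mul_nonsing_inv _ hQ0, Matrix.mul_one,
      ← Matrix.mul_assoc, Matrix.mul_nonsing_inv _ hQ0, Matrix.one_mul]
  -- column facts
  have hQ00 : ∀ i, Q₀ i 0 = v i := by intro i; simp [hQ₀def]
  have hvQ : Q₀ *ᵥ (fun t => if t = 0 then (1:ℝ) else 0) = v := by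
    funext i
    simp [Matrix.mulVec, dotProduct, Fin.sum_univ_three, hQ₀def]
  have hinv_v : Q₀⁻¹ *ᵥ v = (fun t => if t = 0 then (1:ℝ) else 0) := by
    rw [← hvQ, Matrix.mulVec_mulVec, Matrix.nonsing_inv_mul _ hQ0, Matrix.one_mulVec]
  have hcol : ∀ i, C' i 0 = lam * (if i = 0 then 1 else 0) := by
    intro i
    have h1 : C' i 0 = ∑ j, Q₀⁻¹ i j * (C * Q₀) j 0 := by
      rw [← hC'def, Matrix.mul_assoc]
      simp [Matrix.mul_apply]
    have h2 : ∀ j, (C * Q₀) j 0 = lam * v j := by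
      intro j
      have h3 : (C * Q₀) j 0 = ∑ l, C j l * v l := by
        simp [Matrix.mul_apply, hQ00]
      have h4 := congrFun heig j
      simp only [Matrix.mulVec, dotProduct, Pi.smul_apply, smul_eq_mul] at h4
      rw [h3, ← h4]
    have h6 := congrFun hinv_v i
    simp only [Matrix.mulVec, dotProduct] at h6
    rw [h1]
    simp only [h2]
    rw [← h6, Finset.mul_sum]
    exact Finset.sum_congr rfl (by intros; ring)
  have hc00 : C' 0 0 = lam := by simpa using hcol 0
  have hc10 : C' 1 0 = 0 := by simpa using hcol 1
  have hc20 : C' 2 0 = 0 := by simpa using hcol 2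
  obtain ⟨w1, hw1⟩ : ∃ w, C' 0 1 = w := ⟨_, rfl⟩
  obtain ⟨w2, hw2⟩ : ∃ w, C' 0 2 = w := ⟨_, rfl⟩
  rcases l2 (C' 1 1) (C' 1 2) (C' 2 1) (C' 2 2) lam with
    ⟨ha, hd, hb, hcz⟩ |
    ⟨a', b', c', d', r0, r1, s0, s1, μ1, μ2, y10, y11, y20, y21,
      hA, hB, hCC, hD, hμ1, hμ2, e11, e12, e21, e22, hdety⟩
  · -- scalar case
    have hC'eq : C' = lam • (1 : Matrix (Fin 3) (Fin 3) ℝ)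
        + vecMulVec ![1,0,0] ![0, w1, w2] := by
      funext i j
      fin_cases i <;> fin_cases j <;>
        simp [Matrix.vecMulVec_apply, Matrix.one_apply, hc00, hc10, hc20, ha, hd, hb, hcz,
          hw1, hw2]
    refine ⟨1, 1, ![lam, lam, lam], Q₀ *ᵥ ![1,0,0], ![0, w1, w2] ᵥ* Q₀⁻¹,
      by simp, ?_⟩
    rw [hC, hC'eq, Matrix.mul_add, Matrix.add_mul, _root_.mul_vecMulVec, vecMulVec_mul]
    congr 1
    · rw [Matrix.mul_smul, Matrix.mul_one, Matrix.smul_mul, Matrix.mul_nonsing_inv _ hQ0,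
        Matrix.one_mul, Matrix.mul_one]
      funext i j
      fin_cases i <;> fin_cases j <;> simp [Matrix.diagonal, Matrix.one_apply]
  · -- generic case
    obtain ⟨x1, hx1def⟩ : ∃ x, (w1 * y10 + w2 * y11)/(μ1 - lam) = x := ⟨_, rfl⟩
    obtain ⟨x2, hx2def⟩ : ∃ x, (w1 * y20 + w2 * y21)/(μ2 - lam) = x := ⟨_, rfl⟩
    set Q₁ : Matrix (Fin 3) (Fin 3) ℝ := Matrix.of ![![1, x1, x2], ![0, y10, y20], ![0, y11, y21]]
      with hQ₁def
    have hdet1 : Q₁.det = y10 * y21 - y11 * y20 := by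
      simp [hQ₁def, Matrix.det_fin_three, Matrix.vecHead, Matrix.vecTail]
      ring
    have hQ1 : IsUnit Q₁.det := by rw [hdet1]; exact isUnit_iff_ne_zero.2 hdety
    have hsub1 : μ1 - lam ≠ 0 := sub_ne_zero.2 hμ1
    have hsub2 : μ2 - lam ≠ 0 := sub_ne_zero.2 hμ2
    have hkey : (C' - vecMulVec ![0, r0, r1] ![0, s0, s1]) * Q₁
        = Q₁ * Matrix.diagonal ![lam, μ1, μ2] := by
      funext i j
      fin_cases i <;> fin_cases j <;>
        simp [Matrix.mul_apply, Fin.sum_univ_three, hQ₁def, Matrix.vecMulVec_apply,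
          Matrix.diagonal, hc00, hc10, hc20, hw1, hw2, Matrix.vecHead, Matrix.vecTail]
      · rw [← hx1def]; field_simp; ring
      · rw [← hx2def]; field_simp; ring
      · rw [hA, hB]; linear_combination e11
      · rw [hA, hB]; linear_combination e21
      · rw [hCC, hD]; linear_combination e12
      · rw [hCC, hD]; linear_combination e22
    -- assemble
    have hCR : C' - vecMulVec ![0, r0, r1] ![0, s0, s1]
        = Q₁ * Matrix.diagonal ![lam, μ1, μ2] * Q₁⁻¹ := by
      have := congrArg (fun M => M * Q₁⁻¹) hkey
      simpa [Matrix.mul_assoc, Matrix.mul_nonsing_inv _ hQ1] using this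
    have hC'2 : C' = Q₁ * Matrix.diagonal ![lam, μ1, μ2] * Q₁⁻¹
        + vecMulVec ![0, r0, r1] ![0, s0, s1] := by
      rw [← hCR]; exact (sub_add_cancel _ _).symm
    refine ⟨Q₀ * Q₁, Q₁⁻¹ * Q₀⁻¹, ![lam, μ1, μ2],
      Q₀ *ᵥ ![0, r0, r1], ![0, s0, s1] ᵥ* Q₀⁻¹, ?_, ?_⟩
    · rw [Matrix.mul_assoc, ← Matrix.mul_assoc Q₁, Matrix.mul_nonsing_inv _ hQ1,
        Matrix.one_mul, Matrix.mul_nonsing_inv _ hQ0]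
    · rw [hC, hC'2, Matrix.mul_add, Matrix.add_mul, _root_.mul_vecMulVec, vecMulVec_mul]
      congr 1
      simp only [Matrix.mul_assoc]

lemma pairB (A B : Matrix (Fin 3) (Fin 3) ℝ) (hB : IsUnit B.det) :
    ∃ (α β : Fin 4 → ℝ) (u w : Fin 4 → Fin 3 → ℝ),
      (∀ i j, A i j = ∑ t, α t * u t i * w t j) ∧
      (∀ i j, B i j = ∑ t, β t * u t i * w t j) := by
  obtain ⟨Q, P, dv, r, s, hQP, hdecomp⟩ := mainlem (A * B⁻¹)
  have hA : A = Q * Matrix.diagonal dv * (P * B) + vecMulVec r (s ᵥ* B) := by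
    calc A = (A * B⁻¹) * B := by
          rw [Matrix.mul_assoc, Matrix.nonsing_inv_mul _ hB, Matrix.mul_one]
    _ = (Q * Matrix.diagonal dv * P + vecMulVec r s) * B := by rw [hdecomp]
    _ = Q * Matrix.diagonal dv * (P * B) + vecMulVec r (s ᵥ* B) := by
          rw [Matrix.add_mul, vecMulVec_mul, Matrix.mul_assoc (Q * Matrix.diagonal dv)]
  have hB2 : B = Q * (P * B) := by rw [← Matrix.mul_assoc, hQP, Matrix.one_mul]
  refine ⟨![dv 0, dv 1, dv 2, 1], ![1,1,1,0],
    ![fun i => Q i 0, fun i => Q i 1, fun i => Q i 2, r],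
    ![fun j => (P*B) 0 j, fun j => (P*B) 1 j, fun j => (P*B) 2 j, s ᵥ* B], ?_, ?_⟩
  · intro i j
    rw [hA]
    simp [Matrix.add_apply, Matrix.mul_apply, Matrix.vecMulVec_apply, Fin.sum_univ_four,
      Fin.sum_univ_three, Matrix.mul_diagonal, Matrix.diagonal_apply]
    ring
  · intro i j
    conv_lhs => rw [hB2]
    simp [Matrix.mul_apply, Fin.sum_univ_four, Fin.sum_univ_three]

lemma pair_all (A B : Matrix (Fin 3) (Fin 3) ℝ) :
    ∃ (α β : Fin 4 → ℝ) (u w : Fin 4 → Fin 3 → ℝ),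
      (∀ i j, A i j = ∑ t, α t * u t i * w t j) ∧
      (∀ i j, B i j = ∑ t, β t * u t i * w t j) := by
  by_cases hB : IsUnit B.det
  · exact pairB A B hB
  · by_cases hA : IsUnit A.det
    · obtain ⟨α, β, u, w, h1, h2⟩ := pairB B A hA
      exact ⟨β, α, u, w, h2, h1⟩
    · obtain ⟨uA, wA, hA2⟩ := sing2 A (by simpa [isUnit_iff_ne_zero] using hA)
      obtain ⟨uB, wB, hB2⟩ := sing2 B (by simpa [isUnit_iff_ne_zero] using hB)
      refine ⟨![1,1,0,0], ![0,0,1,1], ![uA 0, uA 1, uB 0, uB 1], ![wA 0, wA 1, wB 0, wB 1],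
        ?_, ?_⟩
      · intro i j
        rw [hA2 i j]
        simp [Fin.sum_univ_four]
      · intro i j
        rw [hB2 i j]
        simp [Fin.sum_univ_four]


/-- The rank of a real 2 x m x n tensor: the least natural number `r` such that
the tensor is a sum of `r` rank-one tensors. -/
noncomputable def tensorRank {m n : ℕ} (T : Fin 2 → Fin m → Fin n → ℝ) : ℕ :=
  sInf {r : ℕ | ∃ (a : Fin r → Fin 2 → ℝ) (u : Fin r → Fin m → ℝ) (v : Fin r → Fin n → ℝ),
    ∀ i j k, T i j k = ∑ t, a t i * u t j * v t k}

theorem stmt_3 (T : Fin 2 → Fin 3 → Fin 3 → ℝ) :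
    tensorRank T ≤ 4 := by
  obtain ⟨α, β, u, w, h1, h2⟩ := pair_all (Matrix.of fun j k => T 0 j k)
    (Matrix.of fun j k => T 1 j k)
  apply Nat.sInf_le
  refine ⟨fun t => ![α t, β t], u, w, ?_⟩
  intro i j k
  fin_cases i
  · simpa using h1 j k
  · simpa using h2 j k
end

section
/- Every real tensor of format 2×3×4 has tensor rank at most 5. -/
open Module Submodule Finset

lemma fin3_cases (i : Fin 3) : i = 0 ∨ i = 1 ∨ i = 2 := by omega
lemma fin2_cases (i : Fin 2) : i = 0 ∨ i = 1 := by omega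

lemma parallel_of_cross (r v : Fin 3 → ℝ)
    (h0 : r 1 * v 2 - r 2 * v 1 = 0) (h1 : r 2 * v 0 - r 0 * v 2 = 0)
    (h2 : r 0 * v 1 - r 1 * v 0 = 0)
    (hr : ¬ (r 0 = 0 ∧ r 1 = 0 ∧ r 2 = 0)) :
    ∃ c : ℝ, ∀ i, v i = c * r i := by
  have hd : r 0 ^ 2 + r 1 ^ 2 + r 2 ^ 2 ≠ 0 := by
    intro h
    exact hr ⟨by nlinarith [sq_nonneg (r 0), sq_nonneg (r 1), sq_nonneg (r 2)],
              by nlinarith [sq_nonneg (r 0), sq_nonneg (r 1), sq_nonneg (r 2)],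
              by nlinarith [sq_nonneg (r 0), sq_nonneg (r 1), sq_nonneg (r 2)]⟩
  refine ⟨(r 0 * v 0 + r 1 * v 1 + r 2 * v 2) / (r 0 ^ 2 + r 1 ^ 2 + r 2 ^ 2), ?_⟩
  intro i
  have key : (r 0 ^ 2 + r 1 ^ 2 + r 2 ^ 2) * v i
      = (r 0 * v 0 + r 1 * v 1 + r 2 * v 2) * r i := by
    rcases fin3_cases i with rfl | rfl | rfl
    · linear_combination (-(r 1)) * h2 + r 2 * h1
    · linear_combination r 0 * h2 - r 2 * h0
    · linear_combination (-(r 0)) * h1 + r 1 * h0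
  field_simp
  linarith [key]

lemma core (G H : Fin 2 → Fin 3 → ℝ)
    (P : ∀ (a : Fin 2 → ℝ) (u : Fin 3 → ℝ),
      (∑ i, ∑ j, a i * G i j * u j) = 0 → (∑ i, ∑ j, a i * H i j * u j) = 0) :
    ∃ c : ℝ, H = c • G := by
  -- cross-product identities: for every (x,y), the vector x•H0+y•H1 is parallel
  -- to x•G0+y•G1
  have cross : ∀ x y : ℝ,
      ((x*G 0 1 + y*G 1 1) * (x*H 0 2 + y*H 1 2) - (x*G 0 2 + y*G 1 2) * (x*H 0 1 + y*H 1 1) = 0) ∧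
      ((x*G 0 2 + y*G 1 2) * (x*H 0 0 + y*H 1 0) - (x*G 0 0 + y*G 1 0) * (x*H 0 2 + y*H 1 2) = 0) ∧
      ((x*G 0 0 + y*G 1 0) * (x*H 0 1 + y*H 1 1) - (x*G 0 1 + y*G 1 1) * (x*H 0 0 + y*H 1 0) = 0) := by
    intro x y
    refine ⟨?_, ?_, ?_⟩
    · have h := P ![x, y] ![0, x*G 0 2 + y*G 1 2, -(x*G 0 1 + y*G 1 1)]
        (by simp [Fin.sum_univ_two, Fin.sum_univ_three]; ring)
      simp [Fin.sum_univ_two, Fin.sum_univ_three] at h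
      linear_combination -h
    · have h := P ![x, y] ![-(x*G 0 2 + y*G 1 2), 0, x*G 0 0 + y*G 1 0]
        (by simp [Fin.sum_univ_two, Fin.sum_univ_three]; ring)
      simp [Fin.sum_univ_two, Fin.sum_univ_three] at h
      linear_combination -h
    · have h := P ![x, y] ![x*G 0 1 + y*G 1 1, -(x*G 0 0 + y*G 1 0), 0]
        (by simp [Fin.sum_univ_two, Fin.sum_univ_three]; ring)
      simp [Fin.sum_univ_two, Fin.sum_univ_three] at h
      linear_combination -h
  have rowzero : ∀ x y : ℝ, (∀ j, x * G 0 j + y * G 1 j = 0) →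
      ∀ j, x * H 0 j + y * H 1 j = 0 := by
    intro x y hw j
    rcases fin3_cases j with rfl | rfl | rfl
    · have h := P ![x, y] ![1, 0, 0]
        (by simp [Fin.sum_univ_two, Fin.sum_univ_three]; linear_combination hw 0)
      simp [Fin.sum_univ_two, Fin.sum_univ_three] at h
      linear_combination h
    · have h := P ![x, y] ![0, 1, 0]
        (by simp [Fin.sum_univ_two, Fin.sum_univ_three]; linear_combination hw 1)
      simp [Fin.sum_univ_two, Fin.sum_univ_three] at h
      linear_combination h
    · have h := P ![x, y] ![0, 0, 1]
        (by simp [Fin.sum_univ_two, Fin.sum_univ_three]; linear_combination hw 2)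
      simp [Fin.sum_univ_two, Fin.sum_univ_three] at h
      linear_combination h
  obtain ⟨c00, c01, c02⟩ := cross 1 0
  obtain ⟨c10, c11, c12⟩ := cross 0 1
  obtain ⟨cs0, cs1, cs2⟩ := cross 1 1
  -- mixed cross identities
  have m0 : G 0 1 * H 1 2 - G 0 2 * H 1 1 + (G 1 1 * H 0 2 - G 1 2 * H 0 1) = 0 := by
    linear_combination cs0 - c00 - c10
  have m1 : G 0 2 * H 1 0 - G 0 0 * H 1 2 + (G 1 2 * H 0 0 - G 1 0 * H 0 2) = 0 := by
    linear_combination cs1 - c01 - c11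
  have m2 : G 0 0 * H 1 1 - G 0 1 * H 1 0 + (G 1 0 * H 0 1 - G 1 1 * H 0 0) = 0 := by
    linear_combination cs2 - c02 - c12
  by_cases hr0 : G 0 0 = 0 ∧ G 0 1 = 0 ∧ G 0 2 = 0
  · -- first row of G is zero
    have hH0 : ∀ j, H 0 j = 0 := by
      have h := rowzero 1 0 (fun j => by
        rcases fin3_cases j with rfl | rfl | rfl <;>
          simp [hr0.1, hr0.2.1, hr0.2.2])
      intro j; have := h j; linarith
    by_cases hr1 : G 1 0 = 0 ∧ G 1 1 = 0 ∧ G 1 2 = 0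
    · have hH1 : ∀ j, H 1 j = 0 := by
        have h := rowzero 0 1 (fun j => by
          rcases fin3_cases j with rfl | rfl | rfl <;>
            simp [hr1.1, hr1.2.1, hr1.2.2])
        intro j; have := h j; linarith
      refine ⟨0, ?_⟩
      funext i j
      rcases fin2_cases i with rfl | rfl
      · simp [hH0 j]
      · simp [hH1 j]
    · obtain ⟨c, hc⟩ := parallel_of_cross (G 1) (H 1)
        (by linear_combination c10) (by linear_combination c11) (by linear_combination c12) hr1
      refine ⟨c, ?_⟩
      funext i j
      rcases fin2_cases i with rfl | rfl
      · have hG0 : G 0 j = 0 := by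
          rcases fin3_cases j with rfl | rfl | rfl
          · exact hr0.1
          · exact hr0.2.1
          · exact hr0.2.2
        simp [hH0 j, hG0]
      · simpa using hc j
  · -- first row of G is nonzero
    obtain ⟨α, hα⟩ := parallel_of_cross (G 0) (H 0)
      (by linear_combination c00) (by linear_combination c01) (by linear_combination c02) hr0
    by_cases hpar : G 0 1 * G 1 2 - G 0 2 * G 1 1 = 0 ∧ G 0 2 * G 1 0 - G 0 0 * G 1 2 = 0 ∧
        G 0 0 * G 1 1 - G 0 1 * G 1 0 = 0
    · -- rows of G parallel : G1 = t • G0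
      obtain ⟨t, ht⟩ := parallel_of_cross (G 0) (G 1) hpar.1 hpar.2.1 hpar.2.2 hr0
      have hz := rowzero t (-1) (fun j => by rw [ht j]; ring)
      refine ⟨α, ?_⟩
      funext i j
      rcases fin2_cases i with rfl | rfl
      · simpa using hα j
      · have h1 := hz j
        have h2 := hα j
        have h3 := ht j
        simp only [Pi.smul_apply, smul_eq_mul]
        linear_combination (-1 : ℝ) * h1 + t * h2 + (-α) * h3
    · -- rows of G independent
      have hr1 : ¬ (G 1 0 = 0 ∧ G 1 1 = 0 ∧ G 1 2 = 0) := by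
        rintro ⟨ha, hb, hc⟩
        exact hpar ⟨by rw [hb, hc]; ring, by rw [ha, hc]; ring, by rw [ha, hb]; ring⟩
      obtain ⟨β, hβ⟩ := parallel_of_cross (G 1) (H 1)
        (by linear_combination c10) (by linear_combination c11) (by linear_combination c12) hr1
      -- from the mixed identities : (β - α) * cross(G0,G1) = 0 componentwise
      have e0 : (β - α) * (G 0 1 * G 1 2 - G 0 2 * G 1 1) = 0 := by
        have := m0
        rw [hβ 2, hβ 1, hα 2, hα 1] at this
        linear_combination this
      have e1 : (β - α) * (G 0 2 * G 1 0 - G 0 0 * G 1 2) = 0 := by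
        have := m1
        rw [hβ 0, hβ 2, hα 0, hα 2] at this
        linear_combination this
      have e2 : (β - α) * (G 0 0 * G 1 1 - G 0 1 * G 1 0) = 0 := by
        have := m2
        rw [hβ 1, hβ 0, hα 1, hα 0] at this
        linear_combination this
      have hba : β = α := by
        by_contra hne
        have hvz : β - α ≠ 0 := sub_ne_zero.2 hne
        refine hpar ⟨?_, ?_, ?_⟩
        · rcases mul_eq_zero.1 e0 with h | h
          · exact absurd h hvz
          · exact h
        · rcases mul_eq_zero.1 e1 with h | h
          · exact absurd h hvz
          · exact h
        · rcases mul_eq_zero.1 e2 with h | h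
          · exact absurd h hvz
          · exact h
      refine ⟨α, ?_⟩
      funext i j
      rcases fin2_cases i with rfl | rfl
      · simpa using hα j
      · have := hβ j
        rw [hba] at this
        simpa using this

lemma six_squares {a b c d e f : ℝ}
    (h : a * a + b * b + c * c + (d * d + e * e + f * f) = 0) :
    a = 0 ∧ b = 0 ∧ c = 0 ∧ d = 0 ∧ e = 0 ∧ f = 0 :=
  ⟨by nlinarith [sq_nonneg a, sq_nonneg b, sq_nonneg c, sq_nonneg d, sq_nonneg e, sq_nonneg f],
   by nlinarith [sq_nonneg a, sq_nonneg b, sq_nonneg c, sq_nonneg d, sq_nonneg e, sq_nonneg f],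
   by nlinarith [sq_nonneg a, sq_nonneg b, sq_nonneg c, sq_nonneg d, sq_nonneg e, sq_nonneg f],
   by nlinarith [sq_nonneg a, sq_nonneg b, sq_nonneg c, sq_nonneg d, sq_nonneg e, sq_nonneg f],
   by nlinarith [sq_nonneg a, sq_nonneg b, sq_nonneg c, sq_nonneg d, sq_nonneg e, sq_nonneg f],
   by nlinarith [sq_nonneg a, sq_nonneg b, sq_nonneg c, sq_nonneg d, sq_nonneg e, sq_nonneg f]⟩

def sing (i : Fin 2) (j : Fin 3) : Fin 2 → Fin 3 → ℝ :=
  fun a b => (if a = i then (1 : ℝ) else 0) * (if b = j then 1 else 0)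

lemma repr_lemma (g : (Fin 2 → Fin 3 → ℝ) →ₗ[ℝ] ℝ) (M : Fin 2 → Fin 3 → ℝ) :
    g M = ∑ i, ∑ j, M i j * g (sing i j) := by
  have hM : M = ∑ i, ∑ j, M i j • sing i j := by
    funext a b
    simp only [Finset.sum_apply, Pi.smul_apply, smul_eq_mul, sing,
      Fin.sum_univ_two, Fin.sum_univ_three]
    rcases fin2_cases a with rfl | rfl <;> rcases fin3_cases b with rfl | rfl | rfl <;>
      norm_num [sing, Fin.ext_iff]
  conv_lhs => rw [hM]
  rw [map_sum]
  refine Finset.sum_congr rfl fun i _ => ?_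
  rw [map_sum]
  refine Finset.sum_congr rfl fun j _ => ?_
  rw [map_smul, smul_eq_mul]

theorem stmt_4 (T : Fin 2 → Fin 3 → Fin 4 → ℝ) :
    tensorRank T ≤ 5 := by
  classical
  let slice : Fin 4 → (Fin 2 → Fin 3 → ℝ) := fun k i j => T i j k
  have hdim : finrank ℝ (Fin 2 → Fin 3 → ℝ) = 6 := by
    rw [Module.finrank_pi_fintype]
    simp [Module.finrank_pi]
  have hlt : span ℝ (Set.range slice) < ⊤ := by
    apply lt_top_of_finrank_lt_finrank
    have h1 : finrank ℝ (span ℝ (Set.range slice)) ≤ 4 := by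
      simpa [Set.finrank] using finrank_range_le_card (R := ℝ) slice
    omega
  obtain ⟨f, hf0, hfmap⟩ := Submodule.exists_dual_map_eq_bot_of_lt_top hlt inferInstance
  have hfv : ∀ x ∈ span ℝ (Set.range slice), f x = 0 := by
    intro x hx
    have hmem : f x ∈ Submodule.map f (span ℝ (Set.range slice)) := Submodule.mem_map_of_mem hx
    rw [hfmap] at hmem
    simpa using hmem
  set G : Fin 2 → Fin 3 → ℝ := fun i j => f (sing i j) with hGdef
  have hfM : ∀ M : Fin 2 → Fin 3 → ℝ, f M = ∑ i, ∑ j, M i j * G i j :=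
    fun M => repr_lemma f M
  have hGsq : f G ≠ 0 := by
    intro hzero
    apply hf0
    have hGz : G = 0 := by
      rw [hfM G, Fin.sum_univ_two, Fin.sum_univ_three, Fin.sum_univ_three] at hzero
      obtain ⟨q1, q2, q3, q4, q5, q6⟩ := six_squares hzero
      funext a b
      rcases fin2_cases a with rfl | rfl <;> rcases fin3_cases b with rfl | rfl | rfl
      · exact q1
      · exact q2
      · exact q3
      · exact q4
      · exact q5
      · exact q6
    refine LinearMap.ext fun M => ?_
    rw [hfM M, hGz]
    simp
  set genSet : Set (Fin 2 → Fin 3 → ℝ) :=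
    {R | ∃ (a : Fin 2 → ℝ) (u : Fin 3 → ℝ),
      (∑ i, ∑ j, a i * G i j * u j) = 0 ∧ R = fun i j => a i * u j} with hgenDef
  have hgenker : ∀ R ∈ genSet, f R = 0 := by
    rintro R ⟨a, u, hz, rfl⟩
    rw [hfM, ← hz]
    refine Finset.sum_congr rfl fun i _ => Finset.sum_congr rfl fun j _ => by ring
  have hSle : span ℝ genSet ≤ LinearMap.ker f :=
    span_le.2 fun R hR => LinearMap.mem_ker.2 (hgenker R hR)
  have hTop : span ℝ genSet ⊔ span ℝ {G} = ⊤ := by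
    by_contra hne
    obtain ⟨h, hh0, hhmap⟩ :=
      Submodule.exists_dual_map_eq_bot_of_lt_top (lt_top_iff_ne_top.2 hne) inferInstance
    have hhv : ∀ x ∈ span ℝ genSet ⊔ span ℝ {G}, h x = 0 := by
      intro x hx
      have hmem : h x ∈ Submodule.map h (span ℝ genSet ⊔ span ℝ {G}) :=
        Submodule.mem_map_of_mem hx
      rw [hhmap] at hmem
      simpa using hmem
    set Hm : Fin 2 → Fin 3 → ℝ := fun i j => h (sing i j) with hHmDef
    have hhM : ∀ M : Fin 2 → Fin 3 → ℝ, h M = ∑ i, ∑ j, M i j * Hm i j :=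
      fun M => repr_lemma h M
    have hP : ∀ (a : Fin 2 → ℝ) (u : Fin 3 → ℝ),
        (∑ i, ∑ j, a i * G i j * u j) = 0 → (∑ i, ∑ j, a i * Hm i j * u j) = 0 := by
      intro a u hz
      have hmem : (fun i j => a i * u j) ∈ genSet := ⟨a, u, hz, rfl⟩
      have hval := hhv _ (le_sup_left (α := Submodule ℝ (Fin 2 → Fin 3 → ℝ))
        (a := span ℝ genSet) (b := span ℝ {G}) (subset_span hmem))
      rw [hhM] at hval
      rw [← hval]
      refine Finset.sum_congr rfl fun i _ => Finset.sum_congr rfl fun j _ => by ring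
    obtain ⟨c, hc⟩ := core G Hm hP
    have hhG : h G = 0 := hhv G (le_sup_right (α := Submodule ℝ (Fin 2 → Fin 3 → ℝ))
      (a := span ℝ genSet) (b := span ℝ {G}) (subset_span (Set.mem_singleton G)))
    have hcfG : c * f G = 0 := by
      have e : h G = c * f G := by
        rw [hhM G, hfM G, Finset.mul_sum]
        refine Finset.sum_congr rfl fun i _ => ?_
        rw [Finset.mul_sum]
        refine Finset.sum_congr rfl fun j _ => ?_
        rw [hc]
        simp only [Pi.smul_apply, smul_eq_mul]
        ring
      rw [← e]
      exact hhG
    have hc0 : c = 0 := by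
      rcases mul_eq_zero.1 hcfG with h' | h'
      · exact h'
      · exact absurd h' hGsq
    apply hh0
    refine LinearMap.ext fun M => ?_
    rw [hhM M, hc, hc0]
    simp
  have hker : ∀ M, f M = 0 → M ∈ span ℝ genSet := by
    intro M hM
    have hMtop : M ∈ span ℝ genSet ⊔ span ℝ {G} := by rw [hTop]; trivial
    obtain ⟨s, hs, z, hz, hsz⟩ := Submodule.mem_sup.1 hMtop
    obtain ⟨cM, rfl⟩ := Submodule.mem_span_singleton.1 hz
    have hfs : f s = 0 := hSle hs
    have hcf : cM * f G = 0 := by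
      have : f (s + cM • G) = 0 := by rw [hsz]; exact hM
      rw [map_add, map_smul, hfs, smul_eq_mul] at this
      linarith
    have hcm0 : cM = 0 := by
      rcases mul_eq_zero.1 hcf with h' | h'
      · exact h'
      · exact absurd h' hGsq
    rw [← hsz, hcm0]
    simpa using hs
  obtain ⟨b, hbsub, hbspan, hbind⟩ := exists_linearIndependent ℝ genSet
  have hbfin : b.Finite := hbind.set_finite_of_isNoetherian
  haveI : Fintype b := hbfin.fintype
  set bs : Finset (Fin 2 → Fin 3 → ℝ) := b.toFinset with hbsDef
  have hbscoe : (bs : Set (Fin 2 → Fin 3 → ℝ)) = b := by simp [hbsDef]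
  have hcard : bs.card ≤ 5 := by
    have h1 : finrank ℝ (span ℝ b) = bs.card := finrank_span_set_eq_card hbind
    have h2 : finrank ℝ (span ℝ b) ≤ finrank ℝ (LinearMap.ker f) := by
      apply Submodule.finrank_mono
      rw [hbspan]
      exact hSle
    have h3 : finrank ℝ (LinearMap.ker f) ≤ 5 := by
      have h4 := LinearMap.finrank_range_add_finrank_ker f
      rw [hdim] at h4
      have h5 : finrank ℝ (LinearMap.range f) ≠ 0 := by
        intro hz
        rw [Submodule.finrank_eq_zero] at hz
        exact hf0 (LinearMap.range_eq_bot.1 hz)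
      omega
    omega
  let e := bs.equivFin
  let w : Fin bs.card → (Fin 2 → Fin 3 → ℝ) := fun t => ((e.symm t : bs) : Fin 2 → Fin 3 → ℝ)
  have hwrange : Set.range w = b := by
    rw [← hbscoe]
    ext x
    constructor
    · rintro ⟨t, rfl⟩
      exact (e.symm t).2
    · intro hx
      exact ⟨e ⟨x, hx⟩, by simp [w]⟩
  have hmem : ∀ k : Fin 4, slice k ∈ span ℝ (Set.range w) := by
    intro k
    rw [hwrange, hbspan]
    exact hker (slice k) (hfv (slice k) (subset_span (Set.mem_range_self k)))
  have hx : ∀ k : Fin 4, ∃ c : Fin bs.card → ℝ, ∑ t, c t • w t = slice k :=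
    fun k => (mem_span_range_iff_exists_fun ℝ).1 (hmem k)
  choose cf hcf using hx
  have hgen : ∀ t : Fin bs.card, ∃ (a : Fin 2 → ℝ) (u : Fin 3 → ℝ),
      w t = fun i j => a i * u j := by
    intro t
    have hwb : w t ∈ b := by
      rw [← hwrange]
      exact Set.mem_range_self t
    obtain ⟨a, u, _, hh⟩ := hbsub hwb
    exact ⟨a, u, hh⟩
  choose av uv hw using hgen
  have hmemS : bs.card ∈ {r : ℕ | ∃ (a : Fin r → Fin 2 → ℝ) (u : Fin r → Fin 3 → ℝ)
      (v : Fin r → Fin 4 → ℝ), ∀ i j k, T i j k = ∑ t, a t i * u t j * v t k} := by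
    refine ⟨av, uv, fun t k => cf k t, ?_⟩
    intro i j k
    have h1 : T i j k = (∑ t, cf k t • w t) i j := by rw [hcf k]
    rw [h1]
    simp only [Finset.sum_apply, Pi.smul_apply, smul_eq_mul]
    refine Finset.sum_congr rfl fun t _ => ?_
    have h2 := congrFun (congrFun (hw t) i) j
    rw [h2]
    ring
  exact le_trans (Nat.sInf_le hmemS) hcard
end

section
/- Every real tensor of format 2×3×5 has tensor rank at most 5. -/
set_option maxHeartbeats 3200000

lemma forall_fin23 {p : Fin 2 → Fin 3 → Prop} (h00 : p 0 0) (h01 : p 0 1) (h02 : p 0 2)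
    (h10 : p 1 0) (h11 : p 1 1) (h12 : p 1 2) : ∀ i j, p i j := by
  intro i j
  fin_cases i <;> fin_cases j
  exacts [h00, h01, h02, h10, h11, h12]

/-- Auxiliary property: a fixed family of 5 rank-one `2×3` matrices spans a subspace
containing every matrix `x` orthogonal to `g`. -/
def TensorDecomp (g : Fin 2 → Fin 3 → ℝ) : Prop :=
  ∃ (a : Fin 5 → Fin 2 → ℝ) (u : Fin 5 → Fin 3 → ℝ),
    ∀ x : Fin 2 → Fin 3 → ℝ, (∑ i, ∑ j, g i j * x i j) = 0 →
      ∃ c : Fin 5 → ℝ, ∀ i j, x i j = ∑ t, c t * a t i * u t j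

lemma tensorDecomp_perm (σ : Fin 2 ≃ Fin 2) (τ : Fin 3 ≃ Fin 3) (g : Fin 2 → Fin 3 → ℝ)
    (h : TensorDecomp (fun i j => g (σ i) (τ j))) : TensorDecomp g := by
  obtain ⟨a, u, h⟩ := h
  refine ⟨fun t i => a t (σ.symm i), fun t j => u t (τ.symm j), ?_⟩
  intro x hx
  have hrel : (∑ i, ∑ j, g (σ i) (τ j) * x (σ i) (τ j)) = 0 := by
    calc (∑ i, ∑ j, g (σ i) (τ j) * x (σ i) (τ j)) = ∑ i, ∑ j, g i j * x i j :=
          Fintype.sum_equiv σ _ _ (fun i => Fintype.sum_equiv τ _ _ (fun j => rfl))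
      _ = 0 := hx
  obtain ⟨c, hc⟩ := h (fun i j => x (σ i) (τ j)) hrel
  refine ⟨c, fun i j => ?_⟩
  have := hc (σ.symm i) (τ.symm j)
  simpa using this

lemma tensorDecomp_of_ne (g : Fin 2 → Fin 3 → ℝ) (hA : g 0 0 ≠ 0) : TensorDecomp g := by
  by_cases hD1 : g 0 0 * g 1 1 - g 0 1 * g 1 0 ≠ 0
  · -- Case A
    have hD : (g 0 0)^3 * (g 0 0 * g 1 1 - g 0 1 * g 1 0) ≠ 0 :=
      mul_ne_zero (pow_ne_zero 3 hA) hD1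
    refine ⟨![![1,0], ![1,0], ![0,1], ![1,1], ![g 0 0 - g 1 0, g 0 0]],
      ![![-(g 0 1), g 0 0, 0], ![-(g 0 2), 0, g 0 0], ![-(g 1 1), g 1 0, 0],
        ![-(g 0 1 + g 1 1), g 0 0 + g 1 0, 0],
        ![-((g 0 0 - g 1 0) * g 0 2 + g 0 0 * g 1 2), 0, (g 0 0)^2]], ?_⟩
    intro x hx
    simp only [Fin.sum_univ_two, Fin.sum_univ_three] at hx
    have hx00 : x 0 0 = -(g 0 1 * x 0 1 + g 0 2 * x 0 2 + g 1 0 * x 1 0 + g 1 1 * x 1 1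
        + g 1 2 * x 1 2) / g 0 0 := by
      field_simp
      linear_combination hx
    refine ⟨![
      ((g 0 0)^2 * (g 0 0 * g 1 1 - g 0 1 * g 1 0) * x 0 1
          - (g 0 0 + g 1 0) * (g 1 0 * ((g 0 0)^2 * x 1 0
            + x 1 2 * ((g 0 0 - g 1 0) * g 0 2 + g 0 0 * g 1 2))
            + (g 0 0)^2 * g 1 1 * x 1 1)) / ((g 0 0)^3 * (g 0 0 * g 1 1 - g 0 1 * g 1 0)),
      (g 0 0 * (g 0 0 * g 1 1 - g 0 1 * g 1 0) * (g 0 0 * x 0 2 - (g 0 0 - g 1 0) * x 1 2))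
        / ((g 0 0)^3 * (g 0 0 * g 1 1 - g 0 1 * g 1 0)),
      (-(g 0 0 * ((g 0 1 + g 1 1) * (g 0 0)^2 * x 1 1 + (g 0 0 + g 1 0) * ((g 0 0)^2 * x 1 0
          + x 1 2 * ((g 0 0 - g 1 0) * g 0 2 + g 0 0 * g 1 2)))))
        / ((g 0 0)^3 * (g 0 0 * g 1 1 - g 0 1 * g 1 0)),
      (g 0 0 * (g 1 0 * ((g 0 0)^2 * x 1 0 + x 1 2 * ((g 0 0 - g 1 0) * g 0 2 + g 0 0 * g 1 2))
          + (g 0 0)^2 * g 1 1 * x 1 1)) / ((g 0 0)^3 * (g 0 0 * g 1 1 - g 0 1 * g 1 0)),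
      (x 1 2 * (g 0 0 * g 1 1 - g 0 1 * g 1 0)) / ((g 0 0)^3 * (g 0 0 * g 1 1 - g 0 1 * g 1 0))], ?_⟩
    refine forall_fin23 ?_ ?_ ?_ ?_ ?_ ?_ <;>
      simp only [Fin.sum_univ_five, Matrix.cons_val_zero, Matrix.cons_val_one,
        Matrix.head_cons, Matrix.cons_val_two, Matrix.tail_cons, Matrix.cons_val_three,
        Matrix.cons_val_four]
    · rw [hx00, eq_comm]; field_simp; ring
    all_goals field_simp <;> ring
  · by_cases hD2 : g 0 0 * g 1 2 - g 0 2 * g 1 0 ≠ 0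
    · -- Case B
      have hD : (g 0 0)^3 * (g 0 0 * g 1 2 - g 0 2 * g 1 0) ≠ 0 :=
        mul_ne_zero (pow_ne_zero 3 hA) hD2
      refine ⟨![![1,0], ![1,0], ![0,1], ![1,1], ![g 0 0 - g 1 0, g 0 0]],
        ![![-(g 0 1), g 0 0, 0], ![-(g 0 2), 0, g 0 0], ![-(g 1 2), 0, g 1 0],
          ![-(g 0 2 + g 1 2), 0, g 0 0 + g 1 0],
          ![-((g 0 0 - g 1 0) * g 0 1 + g 0 0 * g 1 1), (g 0 0)^2, 0]], ?_⟩
      intro x hx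
      simp only [Fin.sum_univ_two, Fin.sum_univ_three] at hx
      have hx00 : x 0 0 = -(g 0 1 * x 0 1 + g 0 2 * x 0 2 + g 1 0 * x 1 0 + g 1 1 * x 1 1
          + g 1 2 * x 1 2) / g 0 0 := by
        field_simp
        linear_combination hx
      refine ⟨![
      (g 0 0 * (g 0 0 * g 1 2 - g 0 2 * g 1 0) * (g 0 0 * x 0 1 - (g 0 0 - g 1 0) * x 1 1))
        / ((g 0 0)^3 * (g 0 0 * g 1 2 - g 0 2 * g 1 0)),
      ((g 0 0)^2 * (g 0 0 * g 1 2 - g 0 2 * g 1 0) * x 0 2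
          - (g 0 0 + g 1 0) * (g 1 0 * ((g 0 0)^2 * x 1 0
            + x 1 1 * ((g 0 0 - g 1 0) * g 0 1 + g 0 0 * g 1 1))
            + (g 0 0)^2 * g 1 2 * x 1 2)) / ((g 0 0)^3 * (g 0 0 * g 1 2 - g 0 2 * g 1 0)),
      (-(g 0 0 * ((g 0 2 + g 1 2) * (g 0 0)^2 * x 1 2 + (g 0 0 + g 1 0) * ((g 0 0)^2 * x 1 0
          + x 1 1 * ((g 0 0 - g 1 0) * g 0 1 + g 0 0 * g 1 1)))))
        / ((g 0 0)^3 * (g 0 0 * g 1 2 - g 0 2 * g 1 0)),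
      (g 0 0 * (g 1 0 * ((g 0 0)^2 * x 1 0 + x 1 1 * ((g 0 0 - g 1 0) * g 0 1 + g 0 0 * g 1 1))
          + (g 0 0)^2 * g 1 2 * x 1 2)) / ((g 0 0)^3 * (g 0 0 * g 1 2 - g 0 2 * g 1 0)),
      (x 1 1 * (g 0 0 * g 1 2 - g 0 2 * g 1 0)) / ((g 0 0)^3 * (g 0 0 * g 1 2 - g 0 2 * g 1 0))], ?_⟩
      refine forall_fin23 ?_ ?_ ?_ ?_ ?_ ?_ <;>
        simp only [Fin.sum_univ_five, Matrix.cons_val_zero, Matrix.cons_val_one,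
          Matrix.head_cons, Matrix.cons_val_two, Matrix.tail_cons, Matrix.cons_val_three,
          Matrix.cons_val_four]
      · rw [hx00, eq_comm]; field_simp; ring
      all_goals field_simp <;> ring
    · -- Case C
      push_neg at hD1 hD2
      refine ⟨![![1,0], ![1,0], ![-(g 1 0), g 0 0], ![-(g 1 0), g 0 0], ![-(g 1 0), g 0 0]],
        ![![-(g 0 1), g 0 0, 0], ![-(g 0 2), 0, g 0 0], ![1,0,0], ![0,1,0], ![0,0,1]], ?_⟩
      intro x hx
      simp only [Fin.sum_univ_two, Fin.sum_univ_three] at hx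
      have h11 : g 1 1 = g 0 1 * g 1 0 / g 0 0 := by
        field_simp
        linear_combination hD1
      have h12 : g 1 2 = g 0 2 * g 1 0 / g 0 0 := by
        field_simp
        linear_combination hD2
      have hx00 : x 0 0 = -(g 0 1 * x 0 1 + g 0 2 * x 0 2 + g 1 0 * x 1 0
          + (g 0 1 * g 1 0 / g 0 0) * x 1 1 + (g 0 2 * g 1 0 / g 0 0) * x 1 2) / g 0 0 := by
        rw [← h11, ← h12]
        field_simp
        linear_combination hx
      refine ⟨![
      (g 0 0 * x 0 1 + g 1 0 * x 1 1) / (g 0 0)^2,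
      (g 0 0 * x 0 2 + g 1 0 * x 1 2) / (g 0 0)^2,
      (g 0 0 * x 1 0) / (g 0 0)^2,
      (g 0 0 * x 1 1) / (g 0 0)^2,
      (g 0 0 * x 1 2) / (g 0 0)^2], ?_⟩
      refine forall_fin23 ?_ ?_ ?_ ?_ ?_ ?_ <;>
        simp only [Fin.sum_univ_five, Matrix.cons_val_zero, Matrix.cons_val_one,
          Matrix.head_cons, Matrix.cons_val_two, Matrix.tail_cons, Matrix.cons_val_three,
          Matrix.cons_val_four]
      · rw [hx00]; field_simp; ring
      all_goals field_simp <;> ring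

theorem stmt_5 (T : Fin 2 → Fin 3 → Fin 5 → ℝ) :
    tensorRank T ≤ 5 := by
  classical
  -- the contraction map has a nontrivial kernel, by dimension count
  let L : (Fin 2 → Fin 3 → ℝ) →ₗ[ℝ] (Fin 5 → ℝ) :=
    { toFun := fun g k => ∑ i, ∑ j, g i j * T i j k
      map_add' := by
        intro g h; funext k
        simp [add_mul, Finset.sum_add_distrib]
      map_smul' := by
        intro r g; funext k
        simp [Finset.mul_sum, mul_assoc, mul_add] }
  have hni : ¬ Function.Injective L := by
    intro hinj
    have h1 := LinearMap.finrank_le_finrank_of_injective hinj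
    have h2 : Module.finrank ℝ (Fin 2 → Fin 3 → ℝ) = 6 := by
      simp [Module.finrank_pi_fintype, Module.finrank_fintype_fun_eq_card]
    have h3 : Module.finrank ℝ (Fin 5 → ℝ) = 5 := by
      simp [Module.finrank_fintype_fun_eq_card]
    omega
  obtain ⟨g1, g2, hLg, hne⟩ := Function.not_injective_iff.mp hni
  set g := g1 - g2 with hg
  have hgL : ∀ k, (∑ i, ∑ j, g i j * T i j k) = 0 := by
    intro k
    have : L g = 0 := by rw [hg, map_sub, hLg, sub_self]
    exact congrFun this k
  have hgne : ∃ i j, g i j ≠ 0 := by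
    by_contra hcon
    push_neg at hcon
    apply hne
    have hz : g = 0 := by funext i j; exact hcon i j
    exact sub_eq_zero.mp (hg ▸ hz)
  obtain ⟨i0, j0, hij⟩ := hgne
  have hdec : TensorDecomp g := by
    apply tensorDecomp_perm (Equiv.swap 0 i0) (Equiv.swap 0 j0)
    apply tensorDecomp_of_ne
    simpa [Equiv.swap_apply_left] using hij
  obtain ⟨a, u, hau⟩ := hdec
  have hk : ∀ k : Fin 5, ∃ c : Fin 5 → ℝ,
      ∀ i j, T i j k = ∑ t, c t * a t i * u t j :=
    fun k => hau (fun i j => T i j k) (hgL k)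
  choose c hc using hk
  have hmem : 5 ∈ {r : ℕ | ∃ (a : Fin r → Fin 2 → ℝ) (u : Fin r → Fin 3 → ℝ)
      (v : Fin r → Fin 5 → ℝ), ∀ i j k, T i j k = ∑ t, a t i * u t j * v t k} := by
    refine ⟨a, u, fun t k => c k t, fun i j k => ?_⟩
    rw [hc k i j]
    exact Finset.sum_congr rfl (fun t _ => by ring)
  exact Nat.sInf_le hmem
end

section
/- Let A and B be real n×n matrices and let T be the 2×n×n tensor whose two frontal slices are A and B (i.e., T(0,j,k) = A(j,k) and T(1,j,k) = B(j,k)). If the linear span of A and B contains at least one invertible matrix, then the tensor rank of T is at most ⌊3n/2⌋. -/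
set_option maxHeartbeats 1000000

open Polynomial Module BigOperators DirectSum

noncomputable section

/-- A pencil decomposition of a pair of endomorphisms with index type ι. -/
def PD {V : Type*} [AddCommGroup V] [Module ℝ V] (f g : V →ₗ[ℝ] V)
    (ι : Type*) [Fintype ι] : Prop :=
  ∃ (x : ι → V) (φ : ι → V →ₗ[ℝ] ℝ) (a b : ι → ℝ),
    ∀ w, f w = ∑ t, (a t * φ t w) • x t ∧ g w = ∑ t, (b t * φ t w) • x t

variable {V V' : Type*} [AddCommGroup V] [Module ℝ V] [AddCommGroup V'] [Module ℝ V']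

lemma PD.reindex {f g : V →ₗ[ℝ] V} {ι κ : Type*} [Fintype ι] [Fintype κ]
    (e : ι ≃ κ) (h : PD f g ι) : PD f g κ := by
  obtain ⟨x, φ, a, b, h⟩ := h
  refine ⟨x ∘ e.symm, φ ∘ e.symm, a ∘ e.symm, b ∘ e.symm, fun w => ?_⟩
  obtain ⟨h1, h2⟩ := h w
  constructor
  · rw [h1]; exact (Fintype.sum_equiv e.symm _ _ fun t => rfl).symm
  · rw [h2]; exact (Fintype.sum_equiv e.symm _ _ fun t => rfl).symm

lemma PD.add {f1 g1 f2 g2 : V →ₗ[ℝ] V} {ι κ : Type*} [Fintype ι] [Fintype κ]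
    (h1 : PD f1 g1 ι) (h2 : PD f2 g2 κ) : PD (f1 + f2) (g1 + g2) (ι ⊕ κ) := by
  obtain ⟨x1, φ1, a1, b1, H1⟩ := h1
  obtain ⟨x2, φ2, a2, b2, H2⟩ := h2
  refine ⟨Sum.elim x1 x2, Sum.elim φ1 φ2, Sum.elim a1 a2, Sum.elim b1 b2, fun w => ?_⟩
  constructor
  · rw [Fintype.sum_sum_type]
    simp only [Sum.elim_inl, Sum.elim_inr, LinearMap.add_apply, (H1 w).1, (H2 w).1]
  · rw [Fintype.sum_sum_type]
    simp only [Sum.elim_inl, Sum.elim_inr, LinearMap.add_apply, (H1 w).2, (H2 w).2]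

lemma PD.conj {f g : V →ₗ[ℝ] V} {f' g' : V' →ₗ[ℝ] V'} {ι : Type*} [Fintype ι]
    (e : V ≃ₗ[ℝ] V') (hf : ∀ v, f' (e v) = e (f v)) (hg : ∀ v, g' (e v) = e (g v))
    (h : PD f g ι) : PD f' g' ι := by
  obtain ⟨x, φ, a, b, H⟩ := h
  refine ⟨fun t => e (x t), fun t => (φ t).comp (e.symm : V' →ₗ[ℝ] V), a, b, fun w => ?_⟩
  have hw : w = e (e.symm w) := (e.apply_symm_apply w).symm
  obtain ⟨H1, H2⟩ := H (e.symm w)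
  constructor
  · conv_lhs => rw [hw, hf, H1]
    rw [map_sum]; simp only [map_smul, LinearMap.comp_apply]; rfl
  · conv_lhs => rw [hw, hg, H2]
    rw [map_sum]; simp only [map_smul, LinearMap.comp_apply]; rfl

lemma PD.rank_one (φ : V →ₗ[ℝ] ℝ) (z : V) : PD 0 (φ.smulRight z) (Fin 1) := by
  refine ⟨fun _ => z, fun _ => φ, fun _ => 0, fun _ => 1, fun w => ?_⟩
  constructor
  · simp
  · simp [Fin.sum_univ_one]


lemma PD.sigma {ι : Type*} [Fintype ι] [DecidableEq ι] {W : ι → Type*}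
    [∀ i, AddCommGroup (W i)] [∀ i, Module ℝ (W i)]
    (κ : ι → Type*) [∀ i, Fintype (κ i)]
    (f g : ∀ i, W i →ₗ[ℝ] W i)
    (F G : (⨁ i, W i) →ₗ[ℝ] (⨁ i, W i))
    (hF : ∀ w j, F w j = f j (w j)) (hG : ∀ w j, G w j = g j (w j))
    (h : ∀ i, PD (f i) (g i) (κ i)) : PD F G ((i : ι) × κ i) := by
  choose x φ a b H using h
  refine ⟨fun t => DirectSum.lof ℝ ι W t.1 (x t.1 t.2),
    fun t => (φ t.1 t.2).comp (DirectSum.component ℝ ι W t.1),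
    fun t => a t.1 t.2, fun t => b t.1 t.2, fun w => ?_⟩
  have sumsig : ∀ (M : Type _) [AddCommMonoid M] (F : ((i : ι) × κ i) → M),
      ∑ t : (i : ι) × κ i, F t = ∑ i, ∑ u : κ i, F ⟨i, u⟩ := by
    intro M _ F
    rw [← Finset.univ_sigma_univ, Finset.sum_sigma]
  have main : ∀ (c : (i : ι) → κ i → ℝ) (j : ι),
      (∑ t : (i : ι) × κ i,
        (c t.1 t.2 * φ t.1 t.2 ((DirectSum.component ℝ ι W t.1) w)) •
          DirectSum.lof ℝ ι W t.1 (x t.1 t.2)) j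
      = ∑ u : κ j, (c j u * φ j u (w j)) • x j u := by
    intro c j
    rw [sumsig]
    have happ1 : ∀ (z : ι → ⨁ i, W i), (∑ i, z i) j = ∑ i, z i j :=
      fun z => DFinsupp.finset_sum_apply _ _ _
    have happ2 : ∀ (i : ι) (z : κ i → ⨁ i, W i), (∑ u, z u) j = ∑ u, z u j :=
      fun i z => DFinsupp.finset_sum_apply _ _ _
    rw [happ1]
    rw [Finset.sum_eq_single_of_mem j (Finset.mem_univ j)]
    · rw [happ2]
      congr 1
      ext u
      have : (DirectSum.lof ℝ ι W j (x j u)) j = x j u := DirectSum.lof_apply ℝ _ _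
      rw [DFinsupp.smul_apply, this]
      rfl
    · intro i _ hij
      rw [happ2]
      apply Finset.sum_eq_zero
      intro u _
      rw [DFinsupp.smul_apply]
      have : (DirectSum.lof ℝ ι W i (x i u)) j = 0 := by
        classical
        rw [DirectSum.lof_eq_of]
        exact DFinsupp.single_eq_of_ne (Ne.symm hij)
      rw [this, smul_zero]
  constructor
  · refine DFinsupp.ext fun j => ?_
    rw [hF, (H j (w j)).1]; exact (main a j).symm
  · refine DFinsupp.ext fun j => ?_
    rw [hG, (H j (w j)).2]; exact (main b j).symm

/-- multiplication by the root, as an ℝ-linear endomorphism of `AdjoinRoot q`. -/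
def Xe (q : ℝ[X]) : AdjoinRoot q →ₗ[ℝ] AdjoinRoot q :=
  LinearMap.mulLeft ℝ (AdjoinRoot.root q)

def nodePoly (d : ℕ) : ℝ[X] := ∏ s ∈ Finset.range d, (X - C (s : ℝ))

lemma nodePoly_monic (d : ℕ) : (nodePoly d).Monic :=
  monic_prod_of_monic _ _ fun s _ => monic_X_sub_C _

lemma nodePoly_natDegree (d : ℕ) : (nodePoly d).natDegree = d := by
  rw [nodePoly, natDegree_prod _ _ fun s _ => X_sub_C_ne_zero _]
  have : ∀ x ∈ Finset.range d, (X - C (x : ℝ)).natDegree = 1 :=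
    fun x _ => natDegree_X_sub_C (x : ℝ)
  rw [Finset.sum_congr rfl this]
  simp

lemma blockEigen (d : ℕ) (hd : 1 ≤ d) : PD LinearMap.id (Xe (nodePoly d)) (Fin d) := by
  haveI : Nonempty (Fin d) := ⟨⟨0, hd⟩⟩
  set q := nodePoly d with hq
  have hq0 : q ≠ 0 := (nodePoly_monic d).ne_zero
  haveI : FiniteDimensional ℝ (AdjoinRoot q) :=
    Module.Finite.of_basis (AdjoinRoot.powerBasis hq0).basis
  set v : Fin d → AdjoinRoot q :=
    fun s => AdjoinRoot.mk q (∏ t ∈ (Finset.range d).erase s.val, (X - C (t : ℝ))) with hv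
  have heig : ∀ s, (Xe q) (v s) = ((s : ℕ) : ℝ) • v s := by
    intro s
    rw [hv]
    show AdjoinRoot.root q * _ = _
    rw [← AdjoinRoot.mk_X, ← map_mul, AdjoinRoot.smul_mk]
    rw [← sub_eq_zero, ← map_sub, AdjoinRoot.mk_eq_zero]
    have : X * ∏ t ∈ (Finset.range d).erase s.val, (X - C (t : ℝ)) -
        ((s : ℕ) : ℝ) • ∏ t ∈ (Finset.range d).erase s.val, (X - C (t : ℝ))
        = (X - C ((s : ℕ) : ℝ)) * ∏ t ∈ (Finset.range d).erase s.val, (X - C (t : ℝ)) := by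
      rw [smul_eq_C_mul]; ring
    rw [this]
    have hfact : (X - C ((s : ℕ) : ℝ)) * ∏ t ∈ (Finset.range d).erase s.val, (X - C (t : ℝ)) = q := by
      rw [hq, nodePoly]
      exact Finset.mul_prod_erase (Finset.range d) (fun t => X - C (t : ℝ)) (Finset.mem_range.2 s.isLt)
    rw [hfact]
  have hne : ∀ s, v s ≠ 0 := by
    intro s
    have h0 : (∏ t ∈ (Finset.range d).erase s.val, (X - C (t : ℝ))) ≠ 0 :=
      Finset.prod_ne_zero_iff.2 fun t _ => X_sub_C_ne_zero _
    have hdeg : (∏ t ∈ (Finset.range d).erase s.val, (X - C (t : ℝ))).natDegree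
        < q.natDegree := by
      rw [natDegree_prod _ _ fun t _ => X_sub_C_ne_zero _, hq, nodePoly_natDegree]
      have : ∀ t ∈ (Finset.range d).erase s.val, (X - C (t : ℝ)).natDegree = 1 :=
        fun t _ => natDegree_X_sub_C (t : ℝ)
      rw [Finset.sum_congr rfl this]
      simp only [Finset.sum_const, smul_eq_mul, mul_one]
      rw [Finset.card_erase_of_mem (Finset.mem_range.2 s.isLt), Finset.card_range]
      omega
    exact AdjoinRoot.mk_ne_zero_of_natDegree_lt (nodePoly_monic d) h0 hdeg
  have hli : LinearIndependent ℝ v := by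
    apply Module.End.eigenvectors_linearIndependent' (Xe q) (fun s : Fin d => ((s : ℕ) : ℝ))
    · intro s t hst
      exact Fin.ext (Nat.cast_injective hst)
    · intro s
      exact ⟨Module.End.mem_eigenspace_iff.2 (heig s), hne s⟩
  have hcard : Fintype.card (Fin d) = Module.finrank ℝ (AdjoinRoot q) := by
    rw [Fintype.card_fin, (AdjoinRoot.powerBasis hq0).finrank, AdjoinRoot.powerBasis_dim,
      nodePoly_natDegree]
  set Bv := basisOfLinearIndependentOfCardEqFinrank hli hcard with hBv
  have hBveq : ∀ s, Bv s = v s := by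
    intro s; rw [hBv, coe_basisOfLinearIndependentOfCardEqFinrank]
  refine ⟨v, fun s => Bv.coord s, fun _ => 1, fun s => ((s : ℕ) : ℝ), fun w => ?_⟩
  have hrepr : w = ∑ s, Bv.repr w s • v s := by
    conv_lhs => rw [← Bv.sum_repr w]
    exact Finset.sum_congr rfl fun s _ => by rw [hBveq]
  constructor
  · simp only [LinearMap.id_apply, one_mul]
    conv_lhs => rw [hrepr]
    rfl
  · conv_lhs => rw [hrepr, map_sum]
    refine Finset.sum_congr rfl fun s _ => ?_
    rw [map_smul, heig s, smul_smul, Basis.coord_apply, mul_comm]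

lemma blockSmall {W : Type*} [AddCommGroup W] [Module ℝ W] {d : ℕ}
    (B : Basis (Fin d) ℝ W) (hd : d ≤ 1) (g : W →ₗ[ℝ] W) :
    PD LinearMap.id g (Fin d) := by
  refine ⟨fun t => B t, fun t => B.coord t, fun _ => 1,
    fun t => B.repr (g (B t)) t, fun w => ?_⟩
  have hrepr : w = ∑ s, B.repr w s • B s := (B.sum_repr w).symm
  constructor
  · simp only [LinearMap.id_apply, one_mul]
    conv_lhs => rw [hrepr]
    rfl
  · interval_cases d
    · have : w = 0 := by rw [hrepr]; simp
      rw [this, map_zero]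
      simp
    · conv_lhs => rw [hrepr, map_sum]
      rw [Fin.sum_univ_one, Fin.sum_univ_one, map_smul]
      have : g (B 0) = B.repr (g (B 0)) 0 • B 0 := by
        conv_lhs => rw [← B.sum_repr (g (B 0))]
        rw [Fin.sum_univ_one]
      rw [this, smul_smul, Basis.coord_apply, mul_comm]

lemma blockBig (q : ℝ[X]) (hq0 : q ≠ 0) (hd : 2 ≤ q.natDegree) :
    PD LinearMap.id (Xe q) (Fin (q.natDegree + 1)) := by
  set d := q.natDegree with hdd
  have hqt0 : nodePoly d ≠ 0 := (nodePoly_monic d).ne_zero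
  set Bq : Basis (Fin d) ℝ (AdjoinRoot q) := (AdjoinRoot.powerBasis hq0).basis with hBq
  set Bt : Basis (Fin d) ℝ (AdjoinRoot (nodePoly d)) :=
    ((AdjoinRoot.powerBasis hqt0).basis).reindex (finCongr (by rw [AdjoinRoot.powerBasis_dim, nodePoly_natDegree])) with hBt
  have hBqpow : ∀ j : Fin d, Bq j = AdjoinRoot.root q ^ (j : ℕ) := by
    intro j
    rw [hBq]
    exact ((AdjoinRoot.powerBasis hq0).basis_eq_pow j).trans (by rw [AdjoinRoot.powerBasis_gen])
  have hBtpow : ∀ j : Fin d, Bt j = AdjoinRoot.root (nodePoly d) ^ (j : ℕ) := by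
    intro j
    rw [hBt, Basis.reindex_apply]
    exact ((AdjoinRoot.powerBasis hqt0).basis_eq_pow _).trans (by rw [AdjoinRoot.powerBasis_gen]; simp)
  set e : AdjoinRoot q ≃ₗ[ℝ] AdjoinRoot (nodePoly d) := Bq.equiv Bt (Equiv.refl _) with he
  have heBq : ∀ j, e (Bq j) = Bt j := by intro j; rw [he, Basis.equiv_apply]; rfl
  have heBt : ∀ j, e.symm (Bt j) = Bq j := by
    intro j; rw [he, Basis.equiv_symm, Basis.equiv_apply]; rfl
  set g' : AdjoinRoot (nodePoly d) →ₗ[ℝ] AdjoinRoot (nodePoly d) :=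
    ((e : AdjoinRoot q →ₗ[ℝ] AdjoinRoot (nodePoly d)).comp (Xe q)).comp
      (e.symm : AdjoinRoot (nodePoly d) →ₗ[ℝ] AdjoinRoot q) with hg'
  have hg'app : ∀ v, g' v = e (Xe q (e.symm v)) := fun v => rfl
  have htop : d - 1 < d := by omega
  set top : Fin d := ⟨d - 1, htop⟩ with htopdef
  set z : AdjoinRoot (nodePoly d) := g' (Bt top) - Xe (nodePoly d) (Bt top) with hz
  have hsplit : g' = Xe (nodePoly d) + (Bt.coord top).smulRight z := by
    apply Bt.ext
    intro j
    rw [LinearMap.add_apply, LinearMap.smulRight_apply, Basis.coord_apply, Basis.repr_self]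
    by_cases hj : j = top
    · subst hj
      rw [Finsupp.single_eq_same, one_smul, hz]
      abel
    · rw [Finsupp.single_eq_of_ne' hj, zero_smul, add_zero]
      have hjlt : (j : ℕ) + 1 < d := by
        have := j.isLt
        have : (j : ℕ) ≠ d - 1 := fun h => hj (Fin.ext h)
        omega
      rw [hg'app, heBt, hBqpow]
      have h1 : Xe q (AdjoinRoot.root q ^ (j : ℕ)) = AdjoinRoot.root q ^ ((j : ℕ) + 1) := by
        rw [Xe, LinearMap.mulLeft_apply, ← pow_succ']
      rw [h1]
      have h2 : AdjoinRoot.root q ^ ((j : ℕ) + 1) = Bq ⟨(j : ℕ) + 1, hjlt⟩ := by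
        rw [hBqpow]
      rw [h2, heBq, hBtpow, hBtpow, Xe, LinearMap.mulLeft_apply, ← pow_succ']
  clear_value top z g' e Bt Bq
  have hPD' : PD LinearMap.id g' (Fin d ⊕ Fin 1) := by
    have h := (blockEigen d (by omega)).add (PD.rank_one (Bt.coord top) z)
    rw [add_zero] at h
    rwa [← hsplit] at h
  have hPD : PD LinearMap.id (Xe q) (Fin d ⊕ Fin 1) := by
    refine PD.conj e.symm (fun v => rfl) (fun v => ?_) hPD'
    rw [hg'app]
    rw [LinearEquiv.symm_apply_apply]
  exact hPD.reindex finSumFinEquiv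

/-- scalar multiplication by X as an ℝ-linear endomorphism -/
def XE (V : Type*) [AddCommGroup V] [Module ℝ V] [Module ℝ[X] V]
    [IsScalarTower ℝ ℝ[X] V] : V →ₗ[ℝ] V where
  toFun w := (X : ℝ[X]) • w
  map_add' := smul_add _
  map_smul' r w := by
    simp only [RingHom.id_apply]
    rw [← algebraMap_smul ℝ[X] r w, ← algebraMap_smul ℝ[X] r ((X : ℝ[X]) • w),
      smul_smul, smul_smul, mul_comm]

lemma XE_apply {V : Type*} [AddCommGroup V] [Module ℝ V] [Module ℝ[X] V]
    [IsScalarTower ℝ ℝ[X] V] (w : V) : XE V w = (X : ℝ[X]) • w := rfl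

lemma XE_eq_Xe (q : ℝ[X]) : XE (ℝ[X] ⧸ (ℝ[X] ∙ q)) = Xe q := by
  apply LinearMap.ext
  intro w
  obtain ⟨P, rfl⟩ := Submodule.Quotient.mk_surjective _ w
  rw [XE_apply, ← Submodule.Quotient.mk_smul]
  show _ = AdjoinRoot.root q * AdjoinRoot.mk q P
  rw [← AdjoinRoot.mk_X, ← map_mul]
  rfl

def cnum (q : ℝ[X]) : ℕ := if 2 ≤ q.natDegree then 1 else 0

lemma blockDispatch (q : ℝ[X]) (hq0 : q ≠ 0) :
    PD LinearMap.id (XE (ℝ[X] ⧸ (ℝ[X] ∙ q))) (Fin (q.natDegree + cnum q)) := by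
  rw [XE_eq_Xe]
  by_cases h2 : 2 ≤ q.natDegree
  · have := blockBig q hq0 h2
    rw [cnum, if_pos h2]
    exact this
  · rw [cnum, if_neg h2]
    have hdim : (AdjoinRoot.powerBasis hq0).dim = q.natDegree := AdjoinRoot.powerBasis_dim hq0
    have hb := blockSmall ((AdjoinRoot.powerBasis hq0).basis.reindex (finCongr hdim))
      (by omega) (Xe q)
    exact PD.reindex (finCongr (by omega)) hb

lemma quotients_pd {ι : Type} [Fintype ι] [DecidableEq ι] (Q : ι → ℝ[X]) (hQ : ∀ i, Q i ≠ 0) :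
    PD (V := DirectSum ι (fun i => ℝ[X] ⧸ (ℝ[X] ∙ Q i))) LinearMap.id
      (XE _) ((i : ι) × Fin ((Q i).natDegree + cnum (Q i))) := by
  refine PD.sigma _ (fun i => LinearMap.id) (fun i => XE _) _ _
    (fun w j => rfl) (fun w j => ?_) (fun i => blockDispatch (Q i) (hQ i))
  show ((X : ℝ[X]) • w) j = (X : ℝ[X]) • (w j)
  rfl

lemma pencil_pd {n : ℕ} (f : (Fin n → ℝ) →ₗ[ℝ] (Fin n → ℝ)) :
    ∃ r, r ≤ n + n / 2 ∧ PD LinearMap.id f (Fin r) := by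
  classical
  have htors : Module.IsTorsion ℝ[X] (Module.AEval' f) := by
    intro x
    refine ⟨⟨LinearMap.charpoly f,
      mem_nonZeroDivisors_of_ne_zero f.charpoly_monic.ne_zero⟩, ?_⟩
    apply (Module.AEval'.of f).symm.injective
    rw [Submonoid.smul_def, Module.AEval.of_symm_smul, LinearMap.aeval_self_charpoly]
    simp
  obtain ⟨ι, hι, p, hp, e, ⟨L⟩⟩ := Module.equiv_directSum_of_isTorsion htors
  haveI := hι
  set Q : ι → ℝ[X] := fun i => p i ^ e i with hQdef
  have hQ : ∀ i, Q i ≠ 0 := fun i => pow_ne_zero _ (hp i).ne_zero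
  -- the ℝ-linear equivalence
  set E : (Fin n → ℝ) ≃ₗ[ℝ] DirectSum ι (fun i => ℝ[X] ⧸ (ℝ[X] ∙ Q i)) :=
    (Module.AEval'.of f).trans (L.restrictScalars ℝ) with hE
  have hEf : ∀ m, E (f m) = (X : ℝ[X]) • (E m) := by
    intro m
    have h1 : E (f m) = L (Module.AEval'.of f (f m)) := rfl
    have h2 : Module.AEval'.of f (f m) = (X : ℝ[X]) • (Module.AEval'.of f m) :=
      (Module.AEval'.X_smul_of f m).symm
    rw [h1, h2, map_smul]
    rfl
  have hPD : PD LinearMap.id f ((i : ι) × Fin ((Q i).natDegree + cnum (Q i))) := by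
    refine PD.conj E.symm (fun v => rfl) (fun v => ?_) (quotients_pd Q hQ)
    apply E.injective
    rw [hEf, E.apply_symm_apply, E.apply_symm_apply, XE_apply]
  -- counting
  have hsum : ∑ i, (Q i).natDegree = n := by
    have Bfull : Basis ((i : ι) × Fin ((Q i).natDegree)) ℝ
        (DirectSum ι (fun i => ℝ[X] ⧸ (ℝ[X] ∙ Q i))) :=
      DFinsupp.basis (fun i => (AdjoinRoot.powerBasis (hQ i)).basis)
    have h1 : Module.finrank ℝ (DirectSum ι (fun i => ℝ[X] ⧸ (ℝ[X] ∙ Q i)))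
        = ∑ i, (Q i).natDegree := by
      rw [Module.finrank_eq_card_basis Bfull, Fintype.card_sigma]
      simp
    have h2 : Module.finrank ℝ (Fin n → ℝ) = n := Module.finrank_fin_fun ℝ
    rw [← h1, ← E.finrank_eq, h2]
  refine ⟨Fintype.card ((i : ι) × Fin ((Q i).natDegree + cnum (Q i))), ?_,
    hPD.reindex (Fintype.equivFin _)⟩
  rw [Fintype.card_sigma]
  simp only [Fintype.card_fin]
  rw [Finset.sum_add_distrib, hsum]
  have hc : (∑ i, cnum (Q i)) ≤ n / 2 := by
    rw [Nat.le_div_iff_mul_le (by norm_num)]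
    calc (∑ i, cnum (Q i)) * 2 = ∑ i, (cnum (Q i) * 2) := by rw [Finset.sum_mul]
    _ ≤ ∑ i, (Q i).natDegree := by
        apply Finset.sum_le_sum
        intro i _
        rw [cnum]
        split
        · omega
        · omega
    _ = n := hsum
  omega

theorem stmt_8 (n : ℕ) (A B : Matrix (Fin n) (Fin n) ℝ)
    (hspan : ∃ α β : ℝ, IsUnit (α • A + β • B))
    (T : Fin 2 → Fin n → Fin n → ℝ)
    (hT0 : ∀ j k, T 0 j k = A j k) (hT1 : ∀ j k, T 1 j k = B j k) :
    tensorRank T ≤ 3 * n / 2 := by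
  rcases Nat.eq_zero_or_pos n with hn | hn
  · subst hn
    have h0 : (0 : ℕ) ∈ {r : ℕ | ∃ (a : Fin r → Fin 2 → ℝ) (u : Fin r → Fin 0 → ℝ)
        (v : Fin r → Fin 0 → ℝ), ∀ i j k, T i j k = ∑ t, a t i * u t j * v t k} :=
      ⟨fun t => t.elim0, fun t => t.elim0, fun t => t.elim0, fun i j k => j.elim0⟩
    exact le_trans (Nat.sInf_le h0) (by omega)
  obtain ⟨α, β, hM⟩ := hspan
  set M : Matrix (Fin n) (Fin n) ℝ := α • A + β • B with hMdef
  have hab : ¬(α = 0 ∧ β = 0) := by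
    rintro ⟨rfl, rfl⟩
    haveI : Nonempty (Fin n) := ⟨⟨0, hn⟩⟩
    rw [hMdef] at hM
    simp only [zero_smul, add_zero] at hM
    exact one_ne_zero (isUnit_zero_iff.1 hM).symm
  obtain ⟨γ, δ, hΔ⟩ : ∃ γ δ : ℝ, α * δ - β * γ ≠ 0 := by
    by_cases hα : α = 0
    · exact ⟨1, 0, by simp [hα]; tauto⟩
    · exact ⟨0, 1, by simpa using hα⟩
  set N : Matrix (Fin n) (Fin n) ℝ := γ • A + δ • B with hNdef
  have hdet : IsUnit M.det := (Matrix.isUnit_iff_isUnit_det M).1 hM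
  set Dm : Matrix (Fin n) (Fin n) ℝ := M⁻¹ * N with hDdef
  have hMN : M * Dm = N := by
    rw [hDdef, ← Matrix.mul_assoc, Matrix.mul_nonsing_inv M hdet, Matrix.one_mul]
  obtain ⟨r, hr, x, φ, a, b, H⟩ := pencil_pd (Matrix.mulVecLin Dm)
  set u : Fin r → Fin n → ℝ := fun t => M.mulVec (x t) with hu
  set v : Fin r → Fin n → ℝ := fun t k => φ t (Pi.single k 1) with hv
  have hsingle : ∀ (P : Matrix (Fin n) (Fin n) ℝ) (j k : Fin n),
      P.mulVec (Pi.single k 1) j = P j k := by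
    intro P j k
    simp [Matrix.mulVec, dotProduct, Pi.single_apply, mul_ite]
  have happly : ∀ (c : Fin r → ℝ) (j : Fin n),
      M.mulVec (∑ t, c t • x t) j = ∑ t, c t * u t j := by
    intro c j
    have : M.mulVec (∑ t, c t • x t) = ∑ t, c t • M.mulVec (x t) := by
      show M.mulVecLin (∑ t, c t • x t) = _
      rw [map_sum]
      exact Finset.sum_congr rfl fun t _ => by rw [map_smul]; rfl
    rw [this]
    simp [Finset.sum_apply]
    rfl
  have hMkey : ∀ j k, M j k = ∑ t, (a t * φ t (Pi.single k 1)) * u t j := by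
    intro j k
    have h1 := (H (Pi.single k 1)).1
    simp only [LinearMap.id_apply] at h1
    have := congrArg (fun w => M.mulVec w j) h1
    rw [hsingle] at this
    rw [this, happly]
  have hNkey : ∀ j k, N j k = ∑ t, (b t * φ t (Pi.single k 1)) * u t j := by
    intro j k
    have h2 := (H (Pi.single k 1)).2
    have hDM : Dm.mulVec (Pi.single k 1) = ∑ t, (b t * φ t (Pi.single k 1)) • x t := by
      rw [← h2]; rfl
    have : N.mulVec (Pi.single k 1) j = M.mulVec (Dm.mulVec (Pi.single k 1)) j := by
      rw [Matrix.mulVec_mulVec, hMN]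
    rw [← hsingle N j k, this, hDM, happly]
  have hMentry : ∀ j k, M j k = α * A j k + β * B j k := by
    intro j k; rw [hMdef]; simp [Matrix.add_apply]
  have hNentry : ∀ j k, N j k = γ * A j k + δ * B j k := by
    intro j k; rw [hNdef]; simp [Matrix.add_apply]
  have hA : ∀ j k, A j k = (δ * M j k - β * N j k) / (α * δ - β * γ) := by
    intro j k
    rw [eq_div_iff hΔ]
    linear_combination β * hNentry j k - δ * hMentry j k
  have hB : ∀ j k, B j k = (α * N j k - γ * M j k) / (α * δ - β * γ) := by
    intro j k
    rw [eq_div_iff hΔ]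
    linear_combination γ * hMentry j k - α * hNentry j k
  set aa : Fin r → Fin 2 → ℝ := fun t i =>
    if i = 0 then (δ * a t - β * b t) / (α * δ - β * γ)
    else (α * b t - γ * a t) / (α * δ - β * γ) with haa
  have hdecomp : ∀ i j k, T i j k = ∑ t, aa t i * u t j * v t k := by
    intro i j k
    have hi2 : i = 0 ∨ i = 1 := by
      rcases i with ⟨iv, hiv⟩
      interval_cases iv
      · exact Or.inl rfl
      · exact Or.inr rfl
    rcases hi2 with rfl | rfl
    · rw [hT0, hA j k, hMkey j k, hNkey j k, Finset.mul_sum, Finset.mul_sum,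
        ← Finset.sum_sub_distrib, Finset.sum_div]
      refine Finset.sum_congr rfl fun t _ => ?_
      rw [haa, hv]
      simp only [if_pos rfl]
      field_simp
      rw [if_pos trivial]
      ring
    · rw [hT1, hB j k, hMkey j k, hNkey j k, Finset.mul_sum, Finset.mul_sum,
        ← Finset.sum_sub_distrib, Finset.sum_div]
      refine Finset.sum_congr rfl fun t _ => ?_
      rw [haa, hv]
      simp only [if_neg (by decide : (1 : Fin 2) ≠ 0)]
      field_simp
  have hmem : r ∈ {r : ℕ | ∃ (a : Fin r → Fin 2 → ℝ) (u : Fin r → Fin n → ℝ)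
      (v : Fin r → Fin n → ℝ), ∀ i j k, T i j k = ∑ t, a t i * u t j * v t k} :=
    ⟨aa, u, v, hdecomp⟩
  have hle : tensorRank T ≤ r := Nat.sInf_le hmem
  omega

end
end

section
/- For every real n×n matrix F there exist real symmetric n×n matrices A and B with B invertible such that F = A · B⁻¹. -/
open Matrix Polynomial

set_option maxHeartbeats 1000000
set_option synthInstance.maxHeartbeats 400000

noncomputable section TausskyAux

/-- A symmetric, `X`-self-adjoint, nondegenerate `ℝ`-bilinear form on `ℝ[X] ⧸ (q)`
for `q` monic, given by `(a, b) ↦ coeff (d-1) of (a*b %ₘ q)`. -/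
private lemma aux_form_quot (q : ℝ[X]) (hq : q.Monic) :
    ∃ B : (ℝ[X] ⧸ (ℝ[X] ∙ q)) →ₗ[ℝ] (ℝ[X] ⧸ (ℝ[X] ∙ q)) →ₗ[ℝ] ℝ,
      (∀ v w, B v w = B w v) ∧
      (∀ v w, B ((X : ℝ[X]) • v) w = B v ((X : ℝ[X]) • w)) ∧
      (∀ v, (∀ w, B v w = 0) → v = 0) := by
  set d := q.natDegree with hd
  set lam : (ℝ[X] ⧸ (ℝ[X] ∙ q)) →ₗ[ℝ] ℝ :=
    (Polynomial.lcoeff ℝ (d - 1)).comp (AdjoinRoot.modByMonicHom hq) with hlam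
  have hs : ∀ c : ℝ[X], ((X : ℝ[X]) • (show ℝ[X] ⧸ (ℝ[X] ∙ q) from AdjoinRoot.mk q c))
      = AdjoinRoot.mk q (X * c) := fun c => rfl
  refine ⟨LinearMap.mk₂ ℝ (fun v w => lam (v * w))
      (fun v v' w => by rw [add_mul, map_add])
      (fun r v w => by rw [smul_mul_assoc, _root_.map_smul, smul_eq_mul])
      (fun v w w' => by rw [mul_add, map_add])
      (fun r v w => by rw [mul_smul_comm, _root_.map_smul, smul_eq_mul]), ?_, ?_, ?_⟩
  · intro v w; simp only [LinearMap.mk₂_apply]; rw [mul_comm]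
  · intro v w
    simp only [LinearMap.mk₂_apply]
    congr 1
    induction v using AdjoinRoot.induction_on with
    | ih a =>
    induction w using AdjoinRoot.induction_on with
    | ih b =>
    rw [hs, hs]
    show (AdjoinRoot.mk q (X * a) * AdjoinRoot.mk q b : AdjoinRoot q) = AdjoinRoot.mk q a * AdjoinRoot.mk q (X * b)
    rw [← map_mul (AdjoinRoot.mk q), ← map_mul (AdjoinRoot.mk q)]
    congr 1
    ring
  · intro v hv
    induction v using AdjoinRoot.induction_on with
    | ih a =>
    by_contra hne
    set a' : ℝ[X] := a %ₘ q with ha'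
    have ha'ne : a' ≠ 0 := by
      intro h0
      have hdvd : q ∣ a := (Polynomial.modByMonic_eq_zero_iff_dvd hq).mp h0
      have hmem : a ∈ (ℝ[X] ∙ q) := Submodule.mem_span_singleton.mpr
        ⟨hdvd.choose, by rw [smul_eq_mul, mul_comm]; exact hdvd.choose_spec.symm⟩
      exact hne ((Submodule.Quotient.mk_eq_zero _).mpr hmem)
    set k := a'.natDegree with hk
    have hkd : k < d := by
      have h1 : a'.degree < q.degree := Polynomial.degree_modByMonic_lt a hq
      exact Polynomial.natDegree_lt_natDegree ha'ne h1
    have hthis := hv (AdjoinRoot.mk q (X ^ (d - 1 - k)))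
    change lam ((AdjoinRoot.mk q a * AdjoinRoot.mk q (X ^ (d - 1 - k)) : AdjoinRoot q)) = 0 at hthis
    have hmk : (AdjoinRoot.mk q a : ℝ[X] ⧸ (ℝ[X] ∙ q)) = AdjoinRoot.mk q a' := by
      conv_lhs => rw [← Polynomial.modByMonic_add_div a q]
      rw [map_add (AdjoinRoot.mk q), map_mul (AdjoinRoot.mk q), AdjoinRoot.mk_self,
        zero_mul, add_zero]
    rw [hmk, ← map_mul (AdjoinRoot.mk q)] at hthis
    have hdeg : (a' * X ^ (d - 1 - k)).degree < q.degree := by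
      have h3 : (a' * X ^ (d - 1 - k)) ≠ 0 := mul_ne_zero ha'ne (pow_ne_zero _ Polynomial.X_ne_zero)
      have h1 : (a' * X ^ (d - 1 - k)).natDegree = k + (d - 1 - k) := by
        rw [Polynomial.natDegree_mul ha'ne (pow_ne_zero _ Polynomial.X_ne_zero),
          Polynomial.natDegree_X_pow]
      rw [Polynomial.degree_eq_natDegree h3, Polynomial.degree_eq_natDegree hq.ne_zero]
      exact_mod_cast (by omega : (a' * X ^ (d - 1 - k)).natDegree < q.natDegree)
    have hmod : (a' * X ^ (d - 1 - k)) %ₘ q = a' * X ^ (d - 1 - k) :=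
      (Polynomial.modByMonic_eq_self_iff hq).mpr hdeg
    set m := d - 1 - k with hm
    have hcoeff : (a' * X ^ m).coeff (d - 1) = a'.coeff k := by
      rw [show d - 1 = k + m from by omega, Polynomial.coeff_mul_X_pow]
    have hlamval : lam (AdjoinRoot.mk q (a' * X ^ m)) = a'.coeff k := by
      show ((a' * X ^ m) %ₘ q).coeff (d - 1) = a'.coeff k
      rw [hmod]
      exact hcoeff
    rw [hlamval] at hthis
    exact ha'ne (by rwa [← Polynomial.leadingCoeff, Polynomial.leadingCoeff_eq_zero] at hthis)

private lemma aux_form_quot' (q : ℝ[X]) (hq : q ≠ 0) :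
    ∃ B : (ℝ[X] ⧸ (ℝ[X] ∙ q)) →ₗ[ℝ] (ℝ[X] ⧸ (ℝ[X] ∙ q)) →ₗ[ℝ] ℝ,
      (∀ v w, B v w = B w v) ∧
      (∀ v w, B ((X : ℝ[X]) • v) w = B v ((X : ℝ[X]) • w)) ∧
      (∀ v, (∀ w, B v w = 0) → v = 0) := by
  have h : (ℝ[X] ∙ q) = (ℝ[X] ∙ (normalize q : ℝ[X])) := by
    show Ideal.span {q} = Ideal.span {(normalize q : ℝ[X])}
    exact Ideal.span_singleton_eq_span_singleton.mpr (associated_normalize q)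
  rw [h]
  exact aux_form_quot _ (Polynomial.monic_normalize hq)

/-- Combining symmetric self-adjoint nondegenerate forms on a finite direct sum. -/
private lemma aux_form_dsum {ι : Type} [Fintype ι] [DecidableEq ι]
    (W : ι → Type) [∀ i, AddCommGroup (W i)] [∀ i, Module ℝ[X] (W i)]
    [∀ i, Module ℝ (W i)] [∀ i, IsScalarTower ℝ ℝ[X] (W i)]
    (B : ∀ i, W i →ₗ[ℝ] W i →ₗ[ℝ] ℝ)
    (hsym : ∀ i (v w : W i), B i v w = B i w v)
    (hadj : ∀ i (v w : W i), B i ((X : ℝ[X]) • v) w = B i v ((X : ℝ[X]) • w))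
    (hnd : ∀ i (v : W i), (∀ w, B i v w = 0) → v = 0) :
    ∃ C : (DirectSum ι W) →ₗ[ℝ] (DirectSum ι W) →ₗ[ℝ] ℝ,
      (∀ v w, C v w = C w v) ∧
      (∀ v w, C ((X : ℝ[X]) • v) w = C v ((X : ℝ[X]) • w)) ∧
      (∀ v, (∀ w, C v w = 0) → v = 0) := by
  refine ⟨∑ i : ι, (B i).compl₁₂ (DirectSum.component ℝ ι W i) (DirectSum.component ℝ ι W i),
    ?_, ?_, ?_⟩
  · intro v w
    simp only [LinearMap.sum_apply, LinearMap.compl₁₂_apply]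
    exact Finset.sum_congr rfl fun i _ => hsym i _ _
  · intro v w
    simp only [LinearMap.sum_apply, LinearMap.compl₁₂_apply]
    refine Finset.sum_congr rfl fun i _ => ?_
    have h1 : (DirectSum.component ℝ ι W i) ((X : ℝ[X]) • v)
        = (X : ℝ[X]) • (DirectSum.component ℝ ι W i) v := DFinsupp.smul_apply _ _ _
    have h2 : (DirectSum.component ℝ ι W i) ((X : ℝ[X]) • w)
        = (X : ℝ[X]) • (DirectSum.component ℝ ι W i) w := DFinsupp.smul_apply _ _ _
    rw [h1, h2, hadj]
  · intro v hv
    refine DFinsupp.ext fun i => ?_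
    refine hnd i (v i) fun w => ?_
    have := hv (DirectSum.of W i w)
    simp only [LinearMap.sum_apply, LinearMap.compl₁₂_apply] at this
    rw [Finset.sum_eq_single i] at this
    · have h1 : (DirectSum.component ℝ ι W i) (DirectSum.of W i w) = w := DirectSum.of_eq_same i w
      rw [h1] at this
      exact this
    · intro j _ hji
      have h0 : (DirectSum.component ℝ ι W j) (DirectSum.of W i w) = 0 :=
        DirectSum.of_eq_of_ne _ _ _ hji
      rw [h0, map_zero]
    · intro h; exact absurd (Finset.mem_univ i) h

/-- Every endomorphism of `ℝⁿ` is self-adjoint with respect to some symmetric nondegenerate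
bilinear form. -/
private lemma aux_form_end {n : ℕ} (F : Matrix (Fin n) (Fin n) ℝ) :
    ∃ B : (Fin n → ℝ) →ₗ[ℝ] (Fin n → ℝ) →ₗ[ℝ] ℝ,
      (∀ v w, B v w = B w v) ∧
      (∀ v w, B (F.mulVec v) w = B v (F.mulVec w)) ∧
      (∀ v, (∀ w, B v w = 0) → v = 0) := by
  classical
  set f : (Fin n → ℝ) →ₗ[ℝ] (Fin n → ℝ) := F.mulVecLin with hf
  have hT : Module.IsTorsion ℝ[X] (Module.AEval' f) := by
    intro x
    refine ⟨⟨LinearMap.charpoly f, mem_nonZeroDivisors_of_ne_zero (f.charpoly_monic.ne_zero)⟩, ?_⟩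
    show (LinearMap.charpoly f) • x = 0
    have h0 : (Module.AEval'.of f).symm ((LinearMap.charpoly f) • x)
        = aeval f (LinearMap.charpoly f) • (Module.AEval'.of f).symm x :=
      Module.AEval.of_symm_smul f _ _
    rw [LinearMap.aeval_self_charpoly] at h0
    have : (Module.AEval'.of f).symm ((LinearMap.charpoly f) • x) = 0 := by
      rw [h0]; exact zero_smul _ _
    exact ((Module.AEval'.of f).symm.map_eq_zero_iff).mp this
  obtain ⟨ι, hfin, p, hp, e, ⟨g⟩⟩ := Module.equiv_directSum_of_isTorsion hT
  haveI := hfin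
  haveI : DecidableEq ι := Classical.decEq ι
  have hforms := fun i => aux_form_quot' (p i ^ e i) (pow_ne_zero _ (hp i).ne_zero)
  choose B hsym hadj hnd using hforms
  obtain ⟨C, hCsym, hCadj, hCnd⟩ := aux_form_dsum _ B hsym hadj hnd
  set e' : (Fin n → ℝ) ≃ₗ[ℝ] DirectSum ι (fun i => ℝ[X] ⧸ (ℝ[X] ∙ (p i ^ e i))) :=
    (Module.AEval'.of f).trans (g.restrictScalars ℝ) with he'
  refine ⟨C.compl₁₂ e'.toLinearMap e'.toLinearMap, ?_, ?_, ?_⟩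
  · intro v w
    simp only [LinearMap.compl₁₂_apply, LinearEquiv.coe_coe]
    exact hCsym _ _
  · intro v w
    simp only [LinearMap.compl₁₂_apply, LinearEquiv.coe_coe]
    have key : ∀ u : Fin n → ℝ, e' (F.mulVec u) = (X : ℝ[X]) • e' u := by
      intro u
      rw [he']
      simp only [LinearEquiv.trans_apply]
      have h1 : (Module.AEval'.of f) (F.mulVec u) = (X : ℝ[X]) • (Module.AEval'.of f) u := by
        exact (Module.AEval'.X_smul_of f u).symm
      rw [h1]
      simp only [LinearEquiv.restrictScalars_apply]
      exact g.map_smul _ _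
    rw [key, key, hCadj]
  · intro v hv
    simp only [LinearMap.compl₁₂_apply, LinearEquiv.coe_coe] at hv
    have h0 : e' v = 0 := hCnd _ fun w => by
      have := hv (e'.symm w)
      rwa [LinearEquiv.apply_symm_apply] at this
    simpa using e'.map_eq_zero_iff.mp h0

/-- Taussky–Zelinsky: every real square matrix is intertwined with its transpose by a
symmetric invertible matrix. -/
private lemma aux_taussky {n : ℕ} (F : Matrix (Fin n) (Fin n) ℝ) :
    ∃ S : Matrix (Fin n) (Fin n) ℝ, Sᵀ = S ∧ IsUnit S ∧ S * F = Fᵀ * S := by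
  obtain ⟨B, hsym, hadj, hnd⟩ := aux_form_end F
  set S := LinearMap.toMatrix₂' ℝ B with hS
  have hBval : ∀ v w, B v w = v ⬝ᵥ S *ᵥ w := by
    intro v w
    conv_lhs => rw [← Matrix.toLinearMap₂'_toMatrix' (R := ℝ) B]
    rw [Matrix.toLinearMap₂'_apply']
  have hmatext : ∀ (M N : Matrix (Fin n) (Fin n) ℝ),
      (∀ v w, v ⬝ᵥ M *ᵥ w = v ⬝ᵥ N *ᵥ w) → M = N := by
    intro M N h
    ext i j
    have := h (Pi.single i 1) (Pi.single j 1)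
    simpa [Matrix.mulVec_single, single_dotProduct, dotProduct_single] using this
  have hsymm : Sᵀ = S := by
    ext i j
    rw [Matrix.transpose_apply, hS, LinearMap.toMatrix₂'_apply, LinearMap.toMatrix₂'_apply, hsym]
  have hdet : S.det ≠ 0 := by
    have hndS : S.SeparatingLeft := by
      intro v hv
      exact hnd v fun w => by rw [hBval] at *; convert hv w using 3 <;> rfl
    exact Matrix.separatingLeft_iff_det_ne_zero.mp hndS
  refine ⟨S, hsymm, (Matrix.isUnit_iff_isUnit_det S).mpr (isUnit_iff_ne_zero.mpr hdet), ?_⟩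
  apply hmatext
  intro v w
  have h1 : v ⬝ᵥ (S * F) *ᵥ w = B v (F.mulVec w) := by
    rw [hBval, ← Matrix.mulVec_mulVec]
  have h2 : v ⬝ᵥ (Fᵀ * S) *ᵥ w = B (F.mulVec v) w := by
    rw [hBval (F.mulVec v) w, ← Matrix.mulVec_mulVec]
    rw [Matrix.dotProduct_mulVec v (Fᵀ), Matrix.vecMul_transpose, Matrix.dotProduct_mulVec (F *ᵥ v)]
  rw [h1, h2, hadj]

end TausskyAux

theorem stmt_9 (n : ℕ) (F : Matrix (Fin n) (Fin n) ℝ) :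
    ∃ A B : Matrix (Fin n) (Fin n) ℝ,
      Aᵀ = A ∧ Bᵀ = B ∧ IsUnit B ∧ F = A * B⁻¹ := by
  obtain ⟨S, hS, hU, hSF⟩ := aux_taussky F
  have hdet : IsUnit S.det := (Matrix.isUnit_iff_isUnit_det S).mp hU
  refine ⟨F * S⁻¹, S⁻¹, ?_, ?_, ?_, ?_⟩
  · rw [Matrix.transpose_mul, Matrix.transpose_nonsing_inv, hS]
    have h2 : S⁻¹ * (Fᵀ * S) * S⁻¹ = S⁻¹ * (S * F) * S⁻¹ := by rw [hSF]
    rw [Matrix.mul_assoc, Matrix.mul_assoc, Matrix.mul_nonsing_inv _ hdet, Matrix.mul_one,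
      ← Matrix.mul_assoc, Matrix.nonsing_inv_mul _ hdet, Matrix.one_mul] at h2
    exact h2
  · rw [Matrix.transpose_nonsing_inv, hS]
  · rw [Matrix.isUnit_iff_isUnit_det, Matrix.det_nonsing_inv]
    exact (by rw [Ring.inverse_eq_inv]; exact isUnit_iff_ne_zero.mpr (inv_ne_zero (isUnit_iff_ne_zero.mp hdet)))
  · rw [Matrix.nonsing_inv_nonsing_inv _ hdet, Matrix.mul_assoc,
      Matrix.nonsing_inv_mul _ hdet, Matrix.mul_one]
end
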